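/- arXiv:2010.14673 — 6 statements merged into one kernel-verified Lean document; each statement's English description precedes it below -/
import Mathlib

section
/- Upper hemicontinuity of the ES envelope correspondence: fix α ∈ (0,1) and define G_α(π) = { Θ ∈ P(W) : Θ ≪ π, dΘ/dπ ≤ (1-α)^{-1} π-a.s. } on a Polish space W. If π_n → π weakly and Θ_n ∈ G_α(π_n) for each n, then (Θ_n) has a subsequence converging weakly to some Θ ∈ G_α(π). -/
open MeasureTheory Filter Set BoundedContinuousFunction TopologicalSpace Topology
open scoped ENNReal NNReal
set_option linter.unusedSectionVars false
set_option maxHeartbeats 1000000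

namespace Stmt13Aux

lemma tsum_aux (ε : ℝ≥0∞) : (∑' m : ℕ, ε / 2 ^ (m + 1)) ≤ ε := by
  have h1 : ∀ m : ℕ, ε / 2 ^ (m + 1) = ε * (2⁻¹ : ℝ≥0∞) ^ m * 2⁻¹ := by
    intro m
    rw [div_eq_mul_inv, pow_succ, ENNReal.mul_inv (by simp) (by simp), ENNReal.inv_pow]
    ring
  calc (∑' m : ℕ, ε / 2 ^ (m + 1)) = (∑' m : ℕ, ε * (2⁻¹ : ℝ≥0∞) ^ m) * 2⁻¹ := by
        rw [← ENNReal.tsum_mul_right]; exact tsum_congr h1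
    _ = ε * ((1 - 2⁻¹)⁻¹ * 2⁻¹) := by
        rw [ENNReal.tsum_mul_left, ENNReal.tsum_geometric]; ring
    _ ≤ ε := by
        rw [ENNReal.one_sub_inv_two, inv_inv, ENNReal.mul_inv_cancel (by simp) (by simp),
          mul_one]

variable {W : Type*} [MetricSpace W] [CompleteSpace W] [SecondCountableTopology W]

lemma compact_closure_iInter {A : ℕ → Set W}
    (hA : ∀ m, ∃ t : Set W, t.Finite ∧ A m ⊆ ⋃ y ∈ t, Metric.ball y (1 / (m + 1))) :
    IsCompact (closure (⋂ m, A m)) := by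
  apply TotallyBounded.isCompact_of_isClosed _ isClosed_closure
  apply TotallyBounded.closure
  rw [Metric.totallyBounded_iff]
  intro δ hδ
  obtain ⟨m, hm⟩ := exists_nat_one_div_lt hδ
  obtain ⟨t, ht, hsub⟩ := hA m
  refine ⟨t, ht, ?_⟩
  refine (iInter_subset A m).trans (hsub.trans ?_)
  refine iUnion₂_mono fun y _ => Metric.ball_subset_ball hm.le

variable {W : Type*} [MetricSpace W] [CompleteSpace W] [SecondCountableTopology W]
  [MeasurableSpace W] [BorelSpace W]

-- a countable family of "finite unions of balls of radius 1/(m+1)" exhausting the space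
lemma exists_ball_cover [Nonempty W] (x : ℕ → W) (hx : DenseRange x) (m : ℕ) :
    Monotone (fun n => ⋃ i ∈ Finset.range n, Metric.ball (x i) (1 / (m + 1))) ∧
    (⋃ n, ⋃ i ∈ Finset.range n, Metric.ball (x i) (1 / (m + 1))) = univ := by
  constructor
  · intro a b hab
    intro w hw
    simp only [mem_iUnion, Finset.mem_range] at hw ⊢
    obtain ⟨i, hi, hwi⟩ := hw
    exact ⟨i, lt_of_lt_of_le hi hab, hwi⟩
  · apply eq_univ_of_forall
    intro w
    have hpos : (0 : ℝ) < 1 / (m + 1) := by positivity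
    obtain ⟨i, hi⟩ := hx.exists_dist_lt w hpos
    exact mem_iUnion.mpr ⟨i + 1, mem_biUnion (Finset.self_mem_range_succ i)
      (by simpa [Metric.mem_ball, dist_comm] using hi)⟩

lemma tight_single (μ : Measure W) [IsFiniteMeasure μ] {ε : ℝ≥0∞} (hε : 0 < ε) :
    ∃ K : Set W, IsCompact K ∧ μ Kᶜ ≤ ε := by
  rcases isEmpty_or_nonempty W with hW | hW
  · exact ⟨∅, isCompact_empty, by simp [Set.eq_empty_of_isEmpty (∅ᶜ : Set W)]⟩
  obtain ⟨x, hx⟩ := exists_dense_seq W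
  set V : ℕ → ℕ → Set W := fun m n => ⋃ i ∈ Finset.range n, Metric.ball (x i) (1 / (m + 1))
    with hV
  have hVopen : ∀ m n, IsOpen (V m n) := fun m n =>
    isOpen_biUnion fun i _ => Metric.isOpen_ball
  have key : ∀ m : ℕ, ∃ n, μ (V m n)ᶜ < ε / 2 ^ (m + 1) := by
    intro m
    obtain ⟨hmono, huniv⟩ := exists_ball_cover x hx m
    have htend : Tendsto (fun n => μ (V m n)ᶜ) atTop (𝓝 0) := by
      have h1 : Tendsto (fun n => μ (V m n)) atTop (𝓝 (μ univ)) := by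
        have := tendsto_measure_iUnion_atTop (μ := μ) hmono
        rwa [huniv] at this
      have h2 : ∀ n, μ (V m n)ᶜ = μ univ - μ (V m n) := fun n =>
        measure_compl (hVopen m n).measurableSet (measure_ne_top μ _)
      simp_rw [h2]
      have := ENNReal.Tendsto.sub (tendsto_const_nhds (x := μ univ)) h1
        (Or.inl (measure_ne_top μ _))
      simpa using this
    have hpos : (0 : ℝ≥0∞) < ε / 2 ^ (m + 1) :=
      ENNReal.div_pos hε.ne' (ENNReal.pow_ne_top (by norm_num))
    exact ((htend.eventually (Iio_mem_nhds hpos)).and (eventually_ge_atTop 0)).exists.imp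
      fun n hn => hn.1
  choose nm hnm using key
  refine ⟨closure (⋂ m, V m (nm m)), ?_, ?_⟩
  · apply compact_closure_iInter
    intro m
    exact ⟨x '' (Finset.range (nm m) : Set ℕ), (Set.toFinite _).image x, by
      simp only [hV]
      intro w hw
      simp only [mem_iUnion, Metric.mem_ball] at hw ⊢
      obtain ⟨i, hi, hwi⟩ := hw
      exact ⟨x i, ⟨i, by simpa using hi, rfl⟩, hwi⟩⟩
  · calc μ (closure (⋂ m, V m (nm m)))ᶜ ≤ μ (⋂ m, V m (nm m))ᶜ :=
          measure_mono (compl_subset_compl.mpr subset_closure)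
      _ = μ (⋃ m, (V m (nm m))ᶜ) := by rw [compl_iInter]
      _ ≤ ∑' m, μ (V m (nm m))ᶜ := measure_iUnion_le _
      _ ≤ ∑' m : ℕ, ε / 2 ^ (m + 1) := ENNReal.tsum_le_tsum fun m => (hnm m).le
      _ ≤ ε := tsum_aux ε

lemma tight_of_tendsto {μs : ℕ → ProbabilityMeasure W} {ν : ProbabilityMeasure W}
    (h : Tendsto μs atTop (𝓝 ν)) {ε : ℝ≥0∞} (hε : 0 < ε) :
    ∃ K : Set W, IsCompact K ∧ ∀ n, (μs n : Measure W) Kᶜ ≤ ε := by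
  have hW : Nonempty W := by
    by_contra hW
    have h0 : (ν : Measure W) univ = 1 := measure_univ
    rw [not_nonempty_iff] at hW
    rw [Set.univ_eq_empty_iff.mpr hW] at h0
    simp at h0
  obtain ⟨x, hx⟩ := exists_dense_seq W
  set V : ℕ → ℕ → Set W := fun m n => ⋃ i ∈ Finset.range n, Metric.ball (x i) (1 / (m + 1))
    with hV
  have hVopen : ∀ m n, IsOpen (V m n) := fun m n =>
    isOpen_biUnion fun i _ => Metric.isOpen_ball
  -- key claim: uniformly in n, a single finite ball-union captures all but δ of every μs n
  have key : ∀ m : ℕ, ∀ δ : ℝ≥0∞, 0 < δ → ∃ k, ∀ n, (μs n : Measure W) (V m k)ᶜ ≤ δ := by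
    intro m δ hδ
    obtain ⟨hmono, huniv⟩ := exists_ball_cover x hx m
    -- complement bound from an inclusion `V m j ⊆ V m k` plus a bound on `V m j`
    have hcompl : ∀ (ρ : ProbabilityMeasure W) (j k : ℕ), j ≤ k →
        1 - δ ≤ (ρ : Measure W) (V m j) → (ρ : Measure W) (V m k)ᶜ ≤ δ := by
      intro ρ j k hjk hbound
      have h1 : (ρ : Measure W) (V m k)ᶜ = 1 - (ρ : Measure W) (V m k) := by
        rw [measure_compl (hVopen m k).measurableSet (measure_ne_top _ _), measure_univ]
      rw [h1]
      have h2 : 1 - δ ≤ (ρ : Measure W) (V m k) :=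
        le_trans hbound (measure_mono (hmono hjk))
      exact tsub_le_iff_left.mpr (le_trans le_tsub_add (add_le_add_left h2 _))
    -- the limit measure puts mass ≥ 1 - δ/2 on some V m k₀
    have hνtend : Tendsto (fun n => (ν : Measure W) (V m n)) atTop (𝓝 1) := by
      have := tendsto_measure_iUnion_atTop (μ := (ν : Measure W)) hmono
      rwa [huniv, measure_univ] at this
    have hδ2 : (0:ℝ≥0∞) < δ / 2 := ENNReal.div_pos hδ.ne' (by norm_num)
    have hlt : (1:ℝ≥0∞) - δ/2 < 1 := ENNReal.sub_lt_self ENNReal.one_ne_top one_ne_zero hδ2.ne'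
    obtain ⟨k₀, hk₀⟩ := (hνtend.eventually (lt_mem_nhds hlt)).exists
    -- liminf bound: eventually μs n (V m k₀) > 1 - δ
    have hliminf : ∀ᶠ n in atTop, (1:ℝ≥0∞) - δ ≤ (μs n : Measure W) (V m k₀) := by
      have hopen := ProbabilityMeasure.le_liminf_measure_open_of_tendsto h (hVopen m k₀)
      have h3 : (1:ℝ≥0∞) - δ < (ν : Measure W) (V m k₀) := by
        refine lt_of_le_of_lt ?_ hk₀
        exact tsub_le_tsub le_rfl (ENNReal.half_le_self)
      have h4 : (1:ℝ≥0∞) - δ < liminf (fun n => (μs n : Measure W) (V m k₀)) atTop :=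
        lt_of_lt_of_le h3 hopen
      exact (eventually_lt_of_lt_liminf h4).mono fun n hn => hn.le
    obtain ⟨N, hN⟩ := eventually_atTop.mp hliminf
    -- for the finitely many n < N use individual tightness
    have hsmall : ∀ n, ∃ j, 1 - δ ≤ (μs n : Measure W) (V m j) := by
      intro n
      obtain ⟨K, hK, hKc⟩ := tight_single (μs n : Measure W) hδ
      have hcov : K ⊆ ⋃ j, V m j := by rw [huniv]; exact subset_univ K
      obtain ⟨t, ht⟩ := hK.elim_finite_subcover (V m) (hVopen m) hcov
      refine ⟨t.sup id, ?_⟩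
      have hKj : K ⊆ V m (t.sup id) :=
        ht.trans (iUnion₂_subset fun i hi => hmono (Finset.le_sup (f := id) hi))
      have h1 : (1:ℝ≥0∞) ≤ (μs n : Measure W) K + δ := by
        have := measure_add_measure_compl (μ := (μs n : Measure W)) hK.isClosed.measurableSet
        rw [measure_univ] at this
        calc (1:ℝ≥0∞) = (μs n : Measure W) K + (μs n : Measure W) Kᶜ := this.symm
          _ ≤ (μs n : Measure W) K + δ := add_le_add_right hKc _
      exact tsub_le_iff_right.mpr (h1.trans (add_le_add_left (measure_mono hKj) _))
    choose js hjs using hsmall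
    refine ⟨max k₀ ((Finset.range N).sup js), fun n => ?_⟩
    rcases lt_or_ge n N with hn | hn
    · exact hcompl (μs n) (js n) _ (le_max_of_le_right (Finset.le_sup (Finset.mem_range.mpr hn)))
        (hjs n)
    · exact hcompl (μs n) k₀ _ (le_max_left _ _) (hN n hn)
  -- assemble
  have key2 : ∀ m : ℕ, ∃ k, ∀ n, (μs n : Measure W) (V m k)ᶜ ≤ ε / 2 ^ (m + 1) := fun m =>
    key m _ (ENNReal.div_pos hε.ne' (ENNReal.pow_ne_top (by norm_num)))
  choose km hkm using key2
  refine ⟨closure (⋂ m, V m (km m)), ?_, fun n => ?_⟩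
  · apply compact_closure_iInter
    intro m
    refine ⟨x '' (Finset.range (km m) : Set ℕ), (Set.toFinite _).image x, ?_⟩
    intro w hw
    simp only [hV, mem_iUnion, Metric.mem_ball] at hw ⊢
    obtain ⟨i, hi, hwi⟩ := hw
    exact ⟨x i, ⟨i, by simpa using hi, rfl⟩, hwi⟩
  · calc (μs n : Measure W) (closure (⋂ m, V m (km m)))ᶜ
        ≤ (μs n : Measure W) (⋂ m, V m (km m))ᶜ :=
          measure_mono (compl_subset_compl.mpr subset_closure)
      _ = (μs n : Measure W) (⋃ m, (V m (km m))ᶜ) := by rw [compl_iInter]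
      _ ≤ ∑' m, (μs n : Measure W) (V m (km m))ᶜ := measure_iUnion_le _
      _ ≤ ∑' m : ℕ, ε / 2 ^ (m + 1) := ENNReal.tsum_le_tsum fun m => hkm m n
      _ ≤ ε := tsum_aux ε


lemma prokhorov_sub (μs : ℕ → ProbabilityMeasure W)
    (htight : ∀ ε : ℝ≥0∞, 0 < ε → ∃ K : Set W, IsCompact K ∧ ∀ n, (μs n : Measure W) Kᶜ ≤ ε) :
    ∃ (φ : ℕ → ℕ) (Θ : ProbabilityMeasure W), StrictMono φ ∧
      Tendsto (fun k => μs (φ k)) atTop (𝓝 Θ) := by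
  classical
  have hW : Nonempty W := by
    by_contra hW
    have h0 : (μs 0 : Measure W) univ = 1 := measure_univ
    rw [not_nonempty_iff] at hW
    rw [Set.univ_eq_empty_iff.mpr hW] at h0
    simp at h0
  -- enumerate a countable basis
  have hBne : (countableBasis W).Nonempty := by
    rcases (isBasis_countableBasis W).sUnion_eq ▸ (univ_nonempty (α := W)) with ⟨w, hw⟩
    rcases hw with ⟨s, hs, -⟩
    exact ⟨s, hs⟩
  obtain ⟨b, hb⟩ := (countable_countableBasis W).exists_eq_range hBne
  have hbopen : ∀ i, IsOpen (b i) := fun i =>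
    isOpen_of_mem_countableBasis (hb ▸ mem_range_self i)
  -- finite unions of basis sets
  set U : Finset ℕ → Set W := fun F => ⋃ i ∈ F, b i with hUdef
  have hUopen : ∀ F, IsOpen (U F) := fun F => isOpen_biUnion fun i _ => hbopen i
  have hUmono : ∀ {F G : Finset ℕ}, F ⊆ G → U F ⊆ U G := fun {F G} h =>
    biUnion_subset_biUnion_left h
  have hUunion : ∀ F G, U (F ∪ G) = U F ∪ U G := fun F G => by
    simp only [hUdef]; exact Finset.set_biUnion_union F G b
  -- finite subcovers of compacts inside opens
  have hcov : ∀ {K V : Set W}, IsCompact K → IsOpen V → K ⊆ V →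
      ∃ F : Finset ℕ, K ⊆ U F ∧ U F ⊆ V := by
    intro K V hK hV hKV
    have hpt : ∀ x ∈ K, ∃ i : {i : ℕ // b i ⊆ V}, x ∈ b i.1 := by
      intro x hx
      obtain ⟨s, hs, hxs, hsV⟩ :=
        (isBasis_countableBasis W).exists_subset_of_mem_open (hKV hx) hV
      obtain ⟨i, rfl⟩ := hb ▸ hs
      exact ⟨⟨i, hsV⟩, hxs⟩
    obtain ⟨t, ht⟩ := hK.elim_finite_subcover (fun i : {i : ℕ // b i ⊆ V} => b i.1)
      (fun i => hbopen i.1) (fun x hx => mem_iUnion.mpr (hpt x hx))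
    refine ⟨t.image Subtype.val, ?_, ?_⟩
    · refine ht.trans ?_
      intro w hw
      simp only [mem_iUnion, hUdef, Finset.mem_image] at hw ⊢
      obtain ⟨i, hi, hwi⟩ := hw
      exact ⟨i.1, ⟨i, hi, rfl⟩, hwi⟩
    · intro w hw
      simp only [hUdef, mem_iUnion, Finset.mem_image] at hw
      obtain ⟨j, ⟨i, hi, rfl⟩, hwj⟩ := hw
      exact i.2 hwj
  -- diagonal extraction
  have hcpt : IsCompact (univ : Set (Finset ℕ → ℝ≥0∞)) := isCompact_univ
  obtain ⟨L, -, φ, hφ, hLtendsto⟩ :=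
    hcpt.tendsto_subseq (x := fun n F => (μs n : Measure W) (U F)) (fun n => mem_univ _)
  have hL : ∀ F, Tendsto (fun k => (μs (φ k) : Measure W) (U F)) atTop (𝓝 (L F)) := by
    intro F
    exact (tendsto_pi_nhds.mp hLtendsto) F
  have hL_le_one : ∀ F, L F ≤ 1 := fun F =>
    le_of_tendsto (hL F) (Eventually.of_forall fun k => prob_le_one)
  have hL_mono : ∀ {F G}, U F ⊆ U G → L F ≤ L G := fun {F G} h =>
    le_of_tendsto_of_tendsto' (hL F) (hL G) fun k => measure_mono h
  have hL_subadd : ∀ F G, L (F ∪ G) ≤ L F + L G := by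
    intro F G
    refine le_of_tendsto_of_tendsto' (hL (F ∪ G)) ((hL F).add (hL G)) fun k => ?_
    rw [hUunion]
    exact measure_union_le _ _
  have hL_add : ∀ F G, Disjoint (U F) (U G) → L (F ∪ G) = L F + L G := by
    intro F G hdis
    refine tendsto_nhds_unique (hL (F ∪ G)) ?_
    have : ∀ k, (μs (φ k) : Measure W) (U (F ∪ G))
        = (μs (φ k) : Measure W) (U F) + (μs (φ k) : Measure W) (U G) := fun k => by
      rw [hUunion]
      exact measure_union hdis (hUopen G).measurableSet
    simp_rw [this]
    exact (hL F).add (hL G)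
  -- the set function on compacts
  set E : Set W → ℝ≥0∞ := fun s => ⨅ (F : Finset ℕ) (_ : s ⊆ U F), L F with hEdef
  have hE_le : ∀ {s F}, s ⊆ U F → E s ≤ L F := fun {s F} h => iInf₂_le F h
  have hE_mono : ∀ {s t : Set W}, s ⊆ t → E s ≤ E t := fun {s t} h =>
    le_iInf₂ fun F hF => iInf₂_le F (h.trans hF)
  have hE_le_one : ∀ {K : Set W}, IsCompact K → E K ≤ 1 := by
    intro K hK
    obtain ⟨F, hKF, -⟩ := hcov hK isOpen_univ (subset_univ K)
    exact (hE_le hKF).trans (hL_le_one F)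
  have hE_ne_top : ∀ {K : Set W}, IsCompact K → E K ≠ ∞ := fun {K} hK =>
    ((hE_le_one hK).trans_lt ENNReal.one_lt_top).ne
  -- subadditivity
  have hE_subadd : ∀ {s t : Set W}, E (s ∪ t) ≤ E s + E t := by
    intro s t
    rcases eq_or_ne (E s) ∞ with hs | hs
    · simp [hs]
    rcases eq_or_ne (E t) ∞ with ht | ht
    · simp [ht]
    refine ENNReal.le_of_forall_pos_le_add fun ε hε _ => ?_
    have hε2 : (0:ℝ≥0∞) < ε / 2 := ENNReal.div_pos (by exact_mod_cast hε.ne') (by norm_num)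
    obtain ⟨F, hsF, hF⟩ : ∃ F, s ⊆ U F ∧ L F < E s + ε / 2 := by
      have : E s < E s + ε / 2 := ENNReal.lt_add_right hs hε2.ne'
      rw [hEdef] at this
      simp only [iInf_lt_iff] at this
      obtain ⟨F, hF1, hF2⟩ := this
      exact ⟨F, hF1, hF2⟩
    obtain ⟨G, htG, hG⟩ : ∃ G, t ⊆ U G ∧ L G < E t + ε / 2 := by
      have : E t < E t + ε / 2 := ENNReal.lt_add_right ht hε2.ne'
      rw [hEdef] at this
      simp only [iInf_lt_iff] at this
      obtain ⟨G, hG1, hG2⟩ := this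
      exact ⟨G, hG1, hG2⟩
    have hcover : s ∪ t ⊆ U (F ∪ G) := by
      rw [hUunion]; exact union_subset_union hsF htG
    calc E (s ∪ t) ≤ L (F ∪ G) := hE_le hcover
      _ ≤ L F + L G := hL_subadd F G
      _ ≤ (E s + ε / 2) + (E t + ε / 2) := add_le_add hF.le hG.le
      _ = E s + E t + (↑ε / 2 + ↑ε / 2) := by ring
      _ = E s + E t + ε := by rw [ENNReal.add_halves]
  -- superadditivity for disjoint compacts
  have hE_superadd : ∀ (K₁ K₂ : Compacts W), Disjoint (K₁ : Set W) (K₂ : Set W) →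
      E K₁ + E K₂ ≤ E ((K₁ : Set W) ∪ K₂) := by
    intro K₁ K₂ hdis
    refine le_iInf₂ fun F hF => ?_
    obtain ⟨δ, hδ, hdisδ⟩ := hdis.exists_thickenings K₁.isCompact K₂.isCompact.isClosed
    have h1 : (K₁ : Set W) ⊆ U F ∩ Metric.thickening δ K₁ :=
      subset_inter ((subset_union_left).trans hF) (Metric.self_subset_thickening hδ _)
    have h2 : (K₂ : Set W) ⊆ U F ∩ Metric.thickening δ K₂ :=
      subset_inter ((subset_union_right).trans hF) (Metric.self_subset_thickening hδ _)
    obtain ⟨F₁, hKF₁, hF₁sub⟩ := hcov K₁.isCompact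
      ((hUopen F).inter Metric.isOpen_thickening) h1
    obtain ⟨F₂, hKF₂, hF₂sub⟩ := hcov K₂.isCompact
      ((hUopen F).inter Metric.isOpen_thickening) h2
    have hdisU : Disjoint (U F₁) (U F₂) :=
      hdisδ.mono (hF₁sub.trans inter_subset_right) (hF₂sub.trans inter_subset_right)
    calc E (K₁ : Set W) + E K₂ ≤ L F₁ + L F₂ := add_le_add (hE_le hKF₁) (hE_le hKF₂)
      _ = L (F₁ ∪ F₂) := (hL_add F₁ F₂ hdisU).symm
      _ ≤ L F := by
          refine hL_mono ?_
          rw [hUunion]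
          exact union_subset (hF₁sub.trans inter_subset_left)
            (hF₂sub.trans inter_subset_left)
  -- build the content
  have coe_toNNReal : ∀ {K : Set W}, IsCompact K → ((E K).toNNReal : ℝ≥0∞) = E K :=
    fun {K} hK => ENNReal.coe_toNNReal (hE_ne_top hK)
  set C : Content W :=
    { toFun := fun K => (E K).toNNReal
      mono' := fun K₁ K₂ h => by
        have := hE_mono h
        exact ENNReal.toNNReal_mono (hE_ne_top K₂.isCompact) this
      sup_disjoint' := fun K₁ K₂ hdis _ _ => by
        have hle : E ((K₁ ⊔ K₂ : Compacts W) : Set W) ≤ E K₁ + E K₂ := by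
          simp only [Compacts.coe_sup]; exact hE_subadd
        have hge : E K₁ + E K₂ ≤ E ((K₁ ⊔ K₂ : Compacts W) : Set W) := by
          simp only [Compacts.coe_sup]; exact hE_superadd K₁ K₂ hdis
        have heq : E ((K₁ ⊔ K₂ : Compacts W) : Set W) = E K₁ + E K₂ := le_antisymm hle hge
        show (E ((K₁ ⊔ K₂ : Compacts W) : Set W)).toNNReal = _
        rw [heq, ENNReal.toNNReal_add (hE_ne_top K₁.isCompact) (hE_ne_top K₂.isCompact)]
      sup_le' := fun K₁ K₂ => by
        have hle : E ((K₁ ⊔ K₂ : Compacts W) : Set W) ≤ E K₁ + E K₂ := by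
          simp only [Compacts.coe_sup]; exact hE_subadd
        show (E ((K₁ ⊔ K₂ : Compacts W) : Set W)).toNNReal ≤ _
        rw [← ENNReal.toNNReal_add (hE_ne_top K₁.isCompact) (hE_ne_top K₂.isCompact)]
        exact ENNReal.toNNReal_mono
          (ENNReal.add_ne_top.mpr ⟨hE_ne_top K₁.isCompact, hE_ne_top K₂.isCompact⟩) hle }
    with hCdef
  have hCE : ∀ K : Compacts W, (C K : ℝ≥0∞) = E K := fun K => coe_toNNReal K.isCompact
  set Θ₀ : Measure W := C.measure with hΘ₀
  have hΘopen : ∀ (G : Set W) (hG : IsOpen G), Θ₀ G = C.innerContent ⟨G, hG⟩ := by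
    intro G hG
    rw [hΘ₀, Content.measure_apply _ hG.measurableSet]
    exact C.outerMeasure_opens ⟨G, hG⟩
  -- probability
  have hprob : IsProbabilityMeasure Θ₀ := by
    constructor
    have huniv : Θ₀ univ = C.innerContent ⟨univ, isOpen_univ⟩ := hΘopen univ isOpen_univ
    refine le_antisymm ?_ ?_
    · rw [huniv]
      refine iSup₂_le fun K _ => ?_
      rw [hCE]
      exact hE_le_one K.isCompact
    · refine ENNReal.le_of_forall_pos_le_add fun ε hε _ => ?_
      have hεpos : (0:ℝ≥0∞) < ε := by exact_mod_cast hε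
      obtain ⟨K, hK, hKc⟩ := htight ε hεpos
      have hEK : (1:ℝ≥0∞) - ε ≤ E K := by
        refine le_iInf₂ fun F hF => ?_
        refine ge_of_tendsto (hL F) (Eventually.of_forall fun k => ?_)
        have h1 : (1:ℝ≥0∞) ≤ (μs (φ k) : Measure W) K + ε := by
          have := measure_add_measure_compl (μ := (μs (φ k) : Measure W))
            hK.isClosed.measurableSet
          rw [measure_univ] at this
          calc (1:ℝ≥0∞) = _ + _ := this.symm
            _ ≤ (μs (φ k) : Measure W) K + ε := add_le_add_right (hKc (φ k)) _
        have h2 : (1:ℝ≥0∞) - ε ≤ (μs (φ k) : Measure W) K := tsub_le_iff_right.mpr h1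
        exact h2.trans (measure_mono hF)
      have : (1:ℝ≥0∞) - ε ≤ Θ₀ univ := by
        rw [huniv]
        refine le_trans hEK ?_
        have := le_iSup₂ (f := fun (K' : Compacts W) (_ : (K' : Set W) ⊆ univ) => (C K' : ℝ≥0∞))
          ⟨K, hK⟩ (subset_univ K)
        rw [hCE] at this
        exact this
      exact tsub_le_iff_right.mp this
  -- weak convergence
  set Θp : ProbabilityMeasure W := ⟨Θ₀, hprob⟩ with hΘp
  refine ⟨φ, Θp, hφ, ?_⟩
  apply tendsto_of_forall_isOpen_le_liminf
  intro G hG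
  -- first prove the ℝ≥0∞ inequality
  have hENN : Θ₀ G ≤ atTop.liminf fun k => (μs (φ k) : Measure W) G := by
    rw [hΘopen G hG]
    refine iSup₂_le fun K hKG => ?_
    rw [hCE]
    obtain ⟨F, hKF, hFG⟩ := hcov K.isCompact hG hKG
    have h1 : E (K : Set W) ≤ L F := hE_le hKF
    have h2 : L F ≤ atTop.liminf fun k => (μs (φ k) : Measure W) G := by
      rw [← (hL F).liminf_eq]
      exact liminf_le_liminf (Eventually.of_forall fun k => measure_mono hFG)
    exact h1.trans h2
  -- convert to ℝ≥0
  have aux : (ENNReal.ofNNReal (atTop.liminf fun k => μs (φ k) G)) =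
      atTop.liminf fun k => ((μs (φ k) G : ℝ≥0) : ℝ≥0∞) := by
    refine Monotone.map_liminf_of_continuousAt (F := atTop) ENNReal.coe_mono
      (fun k => μs (φ k) G) ENNReal.continuous_coe.continuousAt ?_ ?_
    · exact IsBoundedUnder.isCoboundedUnder_ge ⟨1, by simp⟩
    · exact ⟨0, by simp⟩
  rw [← ENNReal.coe_le_coe, aux]
  have hcoe : (ENNReal.ofNNReal (Θp G)) = Θ₀ G :=
    ProbabilityMeasure.ennreal_coeFn_eq_coeFn_toMeasure Θp G
  rw [hcoe]
  refine hENN.trans (liminf_le_liminf (Eventually.of_forall fun k => ?_))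
  rw [ProbabilityMeasure.ennreal_coeFn_eq_coeFn_toMeasure]


end Stmt13Aux



theorem stmt_13 {W : Type*} [TopologicalSpace W] [PolishSpace W]
    [MeasurableSpace W] [BorelSpace W]
    (α : ℝ) (hα : α ∈ Set.Ioo (0:ℝ) 1)
    (πn : ℕ → Measure W) (π : Measure W)
    (hπnprob : ∀ n, IsProbabilityMeasure (πn n)) [IsProbabilityMeasure π]
    (hπconv : ∀ f : W →ᵇ ℝ, Tendsto (fun n => ∫ w, f w ∂(πn n)) atTop (nhds (∫ w, f w ∂π)))
    (Θn : ℕ → Measure W) (hΘnprob : ∀ n, IsProbabilityMeasure (Θn n))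
    (habs : ∀ n, Θn n ≪ πn n)
    (hbound : ∀ n, ∀ᵐ w ∂(πn n), (Θn n).rnDeriv (πn n) w ≤ ENNReal.ofReal (1 - α)⁻¹) :
    ∃ (φ : ℕ → ℕ) (Θ : Measure W), StrictMono φ ∧ IsProbabilityMeasure Θ ∧
      Θ ≪ π ∧ (∀ᵐ w ∂π, Θ.rnDeriv π w ≤ ENNReal.ofReal (1 - α)⁻¹) ∧
      ∀ f : W →ᵇ ℝ,
        Tendsto (fun k => ∫ w, f w ∂(Θn (φ k))) atTop (nhds (∫ w, f w ∂Θ)) := by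
  letI := upgradeIsCompletelyMetrizable W
  obtain ⟨hα0, hα1⟩ := hα
  set c : ℝ≥0∞ := ENNReal.ofReal (1 - α)⁻¹ with hc
  have h1α : (0:ℝ) < 1 - α := by linarith
  have hcpos : 0 < c := ENNReal.ofReal_pos.mpr (by positivity)
  have hcne : c ≠ 0 := hcpos.ne'
  have hctop : c ≠ ∞ := ENNReal.ofReal_ne_top
  have hle : ∀ n (A : Set W), Θn n A ≤ c * πn n A := by
    intro n A
    haveI := hπnprob n; haveI := hΘnprob n
    calc Θn n A = ∫⁻ w in A, (Θn n).rnDeriv (πn n) w ∂(πn n) :=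
          (Measure.setLIntegral_rnDeriv (habs n) A).symm
      _ ≤ ∫⁻ _ in A, c ∂(πn n) := setLIntegral_mono_ae aemeasurable_const
          (((hbound n).mono fun w hw => fun _ => hw))
      _ = c * πn n A := by rw [setLIntegral_const]
  set πp : ℕ → ProbabilityMeasure W := fun n => ⟨πn n, hπnprob n⟩ with hπp
  set πl : ProbabilityMeasure W := ⟨π, inferInstance⟩ with hπl
  have hπtend : Tendsto πp atTop (𝓝 πl) :=
    ProbabilityMeasure.tendsto_iff_forall_integral_tendsto.mpr hπconv
  set Θp : ℕ → ProbabilityMeasure W := fun n => ⟨Θn n, hΘnprob n⟩ with hΘp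
  have htight : ∀ ε : ℝ≥0∞, 0 < ε → ∃ K, IsCompact K ∧ ∀ n, (Θp n : Measure W) Kᶜ ≤ ε := by
    intro ε hε
    obtain ⟨K, hK, hKb⟩ := Stmt13Aux.tight_of_tendsto hπtend (ε := ε / c)
      (ENNReal.div_pos hε.ne' hctop)
    refine ⟨K, hK, fun n => ?_⟩
    calc (Θp n : Measure W) Kᶜ = Θn n Kᶜ := rfl
      _ ≤ c * πn n Kᶜ := hle n _
      _ ≤ c * (ε / c) := mul_le_mul_right (hKb n) c
      _ = ε := ENNReal.mul_div_cancel' (fun h => absurd h hcne) (fun h => absurd h hctop)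
  obtain ⟨φ, Θl, hφ, hΘtend⟩ := Stmt13Aux.prokhorov_sub Θp htight
  have hπφ : Tendsto (fun k => πp (φ k)) atTop (𝓝 πl) := hπtend.comp hφ.tendsto_atTop
  have hclosed : ∀ F : Set W, IsClosed F → (Θl : Measure W) F ≤ c * π F := by
    intro F hF
    have hδlim : Tendsto (fun δ : ℝ => c * π (Metric.cthickening δ F)) (𝓝[>] 0)
        (𝓝 (c * π F)) := by
      refine (ENNReal.Tendsto.const_mul ?_ (Or.inr hctop)).mono_left nhdsWithin_le_nhds
      exact tendsto_measure_cthickening_of_isClosed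
        ⟨1, by norm_num, measure_ne_top π _⟩ hF
    have hbound2 : ∀ δ : ℝ, 0 < δ → (Θl : Measure W) F ≤ c * π (Metric.cthickening δ F) := by
      intro δ hδ
      calc (Θl : Measure W) F ≤ (Θl : Measure W) (Metric.thickening δ F) :=
            measure_mono (Metric.self_subset_thickening hδ F)
        _ ≤ atTop.liminf (fun k => (Θp (φ k) : Measure W) (Metric.thickening δ F)) :=
            ProbabilityMeasure.le_liminf_measure_open_of_tendsto hΘtend Metric.isOpen_thickening
        _ ≤ atTop.limsup (fun k => (Θp (φ k) : Measure W) (Metric.thickening δ F)) :=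
            liminf_le_limsup
        _ ≤ atTop.limsup (fun k => c * (πn (φ k)) (Metric.cthickening δ F)) :=
            limsup_le_limsup (Eventually.of_forall fun k =>
              (hle (φ k) _).trans (mul_le_mul_right
                (measure_mono (Metric.thickening_subset_cthickening δ F)) c))
        _ = c * atTop.limsup (fun k => (πn (φ k)) (Metric.cthickening δ F)) :=
            ENNReal.limsup_const_mul_of_ne_top hctop
        _ ≤ c * π (Metric.cthickening δ F) := mul_le_mul_right
            (ProbabilityMeasure.limsup_measure_closed_le_of_tendsto hπφ
              (Metric.isClosed_cthickening)) c
    exact ge_of_tendsto hδlim (eventually_nhdsWithin_of_forall hbound2)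
  have hall : ∀ A : Set W, MeasurableSet A → (Θl : Measure W) A ≤ c * π A := by
    intro A hA
    refine ENNReal.le_of_forall_pos_le_add fun ε hε _ => ?_
    obtain ⟨F, hFA, hFc, hlt⟩ := hA.exists_isClosed_lt_add (μ := (Θl : Measure W))
      (measure_ne_top _ _) (ε := ε) (by exact_mod_cast hε.ne')
    calc (Θl : Measure W) A ≤ (Θl : Measure W) F + ε := hlt.le
      _ ≤ c * π F + ε := add_le_add_left (hclosed F hFc) _
      _ ≤ c * π A + ε := add_le_add_left (mul_le_mul_right (measure_mono hFA) c) _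
  have habsΘ : (Θl : Measure W) ≪ π := by
    refine Measure.AbsolutelyContinuous.mk fun s hs hs0 => ?_
    have := hall s hs
    rw [hs0, mul_zero] at this
    exact le_antisymm this zero_le
  have hrn : ∀ᵐ w ∂π, (Θl : Measure W).rnDeriv π w ≤ c := by
    refine ae_le_of_forall_setLIntegral_le_of_sigmaFinite
      (Measure.measurable_rnDeriv _ _) fun s hs _ => ?_
    rw [Measure.setLIntegral_rnDeriv habsΘ s, setLIntegral_const]
    exact hall s hs
  exact ⟨φ, Θl, hφ, inferInstance, habsΘ, hrn,
    fun f => (ProbabilityMeasure.tendsto_iff_forall_integral_tendsto.mp hΘtend) f⟩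
end

section
/- Lower hemicontinuity with continuous density: let π_n → π weakly on a Polish space W, α ∈ (0,1), Θ ∈ G_α(π), and suppose dΘ/dπ has a version η that is bounded continuous with 0 ≤ η ≤ (1-α)^{-1}. Then there exist Θ_n ∈ G_α(π_n) with Θ_n → Θ weakly. -/
open MeasureTheory Filter Set BoundedContinuousFunction

private lemma density_aux {α m x : ℝ} (hα0 : 0 < α) (hα1 : α < 1) (hm0 : 0 ≤ m)
    (hx0 : 0 ≤ x) (hx : x ≤ (1 - α)⁻¹) :
    0 ≤ α / max (1 - (1 - α) * m) (α * m) * x + (1 - α / max (1 - (1 - α) * m) (α * m) * m) ∧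
    α / max (1 - (1 - α) * m) (α * m) * x + (1 - α / max (1 - (1 - α) * m) (α * m) * m)
      ≤ (1 - α)⁻¹ := by
  have h1α : (0:ℝ) < 1 - α := by linarith
  set D : ℝ := max (1 - (1 - α) * m) (α * m) with hD_def
  have hDα : α ≤ D := by
    rcases le_total m 1 with hm1 | hm1
    · exact le_trans (by nlinarith) (le_max_left _ _)
    · exact le_trans (by nlinarith) (le_max_right _ _)
  have hD : 0 < D := lt_of_lt_of_le hα0 hDα
  have hc0 : 0 ≤ α / D := div_nonneg hα0.le hD.le
  have hcm : α / D * m ≤ 1 := by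
    rw [div_mul_eq_mul_div, div_le_one hD]
    exact le_max_right _ _
  refine ⟨by nlinarith [mul_nonneg hc0 hx0], ?_⟩
  have hinv : (1 - α) * (1 - α)⁻¹ = 1 := mul_inv_cancel₀ h1α.ne'
  have hinvpos : (0:ℝ) < (1 - α)⁻¹ := by positivity
  have hinv1 : (1:ℝ) < (1 - α)⁻¹ := by nlinarith
  have h2 : 1 - (1 - α) * m ≤ D := le_max_left _ _
  have key : α * x + (D - α * m) ≤ (1 - α)⁻¹ * D := by
    have h1 : α * x ≤ α * (1 - α)⁻¹ := by nlinarith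
    nlinarith [mul_le_mul_of_nonneg_left h2 (by linarith : (0:ℝ) ≤ (1-α)⁻¹ - 1), hinv]
  have heq : α / D * x + (1 - α / D * m) = (α * x + (D - α * m)) / D := by
    field_simp
  rw [heq, div_le_iff₀ hD]
  linarith

theorem stmt_14 {W : Type*} [TopologicalSpace W] [PolishSpace W]
    [MeasurableSpace W] [BorelSpace W]
    (α : ℝ) (hα : α ∈ Set.Ioo (0:ℝ) 1)
    (πn : ℕ → Measure W) (π : Measure W)
    (hπnprob : ∀ n, IsProbabilityMeasure (πn n)) [IsProbabilityMeasure π]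
    (hπconv : ∀ f : W →ᵇ ℝ, Tendsto (fun n => ∫ w, f w ∂(πn n)) atTop (nhds (∫ w, f w ∂π)))
    (Θ : Measure W) [IsProbabilityMeasure Θ]
    -- Θ ∈ G_α(π) with a bounded continuous version η of dΘ/dπ
    (η : W → ℝ) (hηcont : Continuous η) (hη0 : ∀ w, 0 ≤ η w) (hηA : ∀ w, η w ≤ (1 - α)⁻¹)
    (hΘ : Θ = π.withDensity (fun w => ENNReal.ofReal (η w))) :
    ∃ Θn : ℕ → Measure W, (∀ n, IsProbabilityMeasure (Θn n)) ∧
      (∀ n, Θn n ≪ πn n) ∧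
      (∀ n, ∀ᵐ w ∂(πn n), (Θn n).rnDeriv (πn n) w ≤ ENNReal.ofReal (1 - α)⁻¹) ∧
      ∀ f : W →ᵇ ℝ,
        Tendsto (fun n => ∫ w, f w ∂(Θn n)) atTop (nhds (∫ w, f w ∂Θ)) := by
  obtain ⟨hα0, hα1⟩ := hα
  have h1α : (0:ℝ) < 1 - α := by linarith
  -- η as a bounded continuous function
  set ηb : W →ᵇ ℝ := BoundedContinuousFunction.ofNormedAddCommGroup η hηcont (1 - α)⁻¹
    (fun w => by rw [Real.norm_eq_abs, abs_of_nonneg (hη0 w)]; exact hηA w) with hηb_def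
  have hηb_coe : ⇑ηb = η := rfl
  -- masses
  set m : ℕ → ℝ := fun n => ∫ w, η w ∂(πn n) with hm_def
  have hm0 : ∀ n, 0 ≤ m n := fun n => integral_nonneg hη0
  -- ∫ η dπ = 1
  have hηπ_int : Integrable η π := by rw [← hηb_coe]; exact ηb.integrable π
  have hmπ : ∫ w, η w ∂π = 1 := by
    have h1 : Θ Set.univ = 1 := measure_univ
    rw [hΘ, withDensity_apply _ MeasurableSet.univ, setLIntegral_univ,
      ← ofReal_integral_eq_lintegral_ofReal hηπ_int (Filter.Eventually.of_forall hη0)] at h1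
    have := (ENNReal.ofReal_eq_one).mp h1
    linarith
  have hmconv : Tendsto m atTop (nhds 1) := by
    have := hπconv ηb
    rw [hηb_coe, hmπ] at this
    exact this
  -- the mixing coefficients
  set c : ℕ → ℝ := fun n => α / max (1 - (1 - α) * m n) (α * m n) with hc_def
  have hc_tendsto : Tendsto c atTop (nhds 1) := by
    have hcont : ContinuousAt (fun x : ℝ => α / max (1 - (1 - α) * x) (α * x)) 1 := by
      apply ContinuousAt.div
      · fun_prop
      · fun_prop
      · simp only [mul_one]
        have : max (1 - (1 - α)) α = α := by
          rw [max_eq_right]; · ring_nf; · linarith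
        rw [this]; exact ne_of_gt hα0
    have := hcont.tendsto.comp hmconv
    simp only [Function.comp_def, mul_one] at this
    have hval : α / max (1 - (1 - α)) α = 1 := by
      have h : max (1 - (1 - α)) α = α := by
        rw [max_eq_right]; · ring_nf; · linarith
      rw [h, div_self (ne_of_gt hα0)]
    rw [hval] at this
    exact this
  -- the densities
  set ρ : ℕ → W → ℝ := fun n w => c n * η w + (1 - c n * m n) with hρ_def
  have hρ_bounds : ∀ n w, 0 ≤ ρ n w ∧ ρ n w ≤ (1 - α)⁻¹ := fun n w =>
    density_aux hα0 hα1 (hm0 n) (hη0 w) (hηA w)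
  have hρ_meas : ∀ n, Measurable fun w => ENNReal.ofReal (ρ n w) := fun n =>
    ENNReal.measurable_ofReal.comp
      ((measurable_const.mul hηcont.measurable).add measurable_const)
  have hρ_int : ∀ n, Integrable (ρ n) (πn n) := by
    intro n
    have : Integrable η (πn n) := by rw [← hηb_coe]; exact ηb.integrable (πn n)
    exact (this.const_mul _).add (integrable_const _)
  have hρ_integral : ∀ n, ∫ w, ρ n w ∂(πn n) = 1 := by
    intro n
    haveI := hπnprob n
    rw [hρ_def]
    rw [integral_add (((by rw [← hηb_coe]; exact ηb.integrable (πn n)) :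
      Integrable η (πn n)).const_mul _) (integrable_const _),
      integral_const_mul, integral_const]
    simp [← hm_def]
    show c n * m n + (1 - c n * m n) = 1
    ring
  refine ⟨fun n => (πn n).withDensity (fun w => ENNReal.ofReal (ρ n w)), ?_, ?_, ?_, ?_⟩
  · -- probability measures
    intro n
    haveI := hπnprob n
    constructor
    rw [withDensity_apply _ MeasurableSet.univ, setLIntegral_univ,
      ← ofReal_integral_eq_lintegral_ofReal (hρ_int n)
        (Filter.Eventually.of_forall fun w => (hρ_bounds n w).1),
      hρ_integral n, ENNReal.ofReal_one]
  · -- absolute continuity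
    exact fun n => withDensity_absolutelyContinuous _ _
  · -- rnDeriv bound
    intro n
    haveI := hπnprob n
    filter_upwards [Measure.rnDeriv_withDensity (πn n) (hρ_meas n)] with w hw
    rw [hw]
    exact ENNReal.ofReal_le_ofReal (hρ_bounds n w).2
  · -- weak convergence
    intro f
    have hrw : ∀ (μ : Measure W) (g : W → ℝ), Measurable g → (∀ w, 0 ≤ g w) →
        ∫ w, f w ∂(μ.withDensity (fun w => ENNReal.ofReal (g w)))
          = ∫ w, g w * f w ∂μ := by
      intro μ g hg hg0
      have hcoe : (fun w => ENNReal.ofReal (g w))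
          = fun w => ((Real.toNNReal (g w) : NNReal) : ENNReal) := rfl
      rw [hcoe, integral_withDensity_eq_integral_smul hg.real_toNNReal]
      congr 1
      ext w
      rw [NNReal.smul_def, Real.coe_toNNReal _ (hg0 w), smul_eq_mul]
    have hΘ_int : ∫ w, f w ∂Θ = ∫ w, η w * f w ∂π := by
      rw [hΘ, hrw π η hηcont.measurable hη0]
    have hΘn_int : ∀ n, ∫ w, f w ∂((πn n).withDensity (fun w => ENNReal.ofReal (ρ n w)))
        = c n * ∫ w, η w * f w ∂(πn n) + (1 - c n * m n) * ∫ w, f w ∂(πn n) := by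
      intro n
      haveI := hπnprob n
      rw [hrw (πn n) (ρ n) ((measurable_const.mul hηcont.measurable).add measurable_const)
        (fun w => (hρ_bounds n w).1)]
      have hint1 : Integrable (fun w => η w * f w) (πn n) := by
        have := (ηb * f).integrable (πn n)
        have h2 : Integrable (η * ⇑f) (πn n) := by
          simpa [BoundedContinuousFunction.coe_mul, hηb_coe] using this
        exact h2
      have : (fun w => ρ n w * f w)
          = fun w => c n * (η w * f w) + (1 - c n * m n) * f w := by
        funext w; rw [hρ_def]; ring
      rw [this, integral_add (hint1.const_mul _) ((f.integrable (πn n)).const_mul _),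
        integral_const_mul, integral_const_mul]
    have hηf_conv : Tendsto (fun n => ∫ w, η w * f w ∂(πn n)) atTop
        (nhds (∫ w, η w * f w ∂π)) := by
      have := hπconv (ηb * f)
      simpa [BoundedContinuousFunction.coe_mul, hηb_coe] using this
    have hf_conv := hπconv f
    have hmain : Tendsto
        (fun n => c n * ∫ w, η w * f w ∂(πn n) + (1 - c n * m n) * ∫ w, f w ∂(πn n))
        atTop (nhds (∫ w, f w ∂Θ)) := by
      have := (hc_tendsto.mul hηf_conv).add
        ((((tendsto_const_nhds : Tendsto (fun _ : ℕ => (1:ℝ)) atTop (nhds 1)).sub (hc_tendsto.mul hmconv))).mul hf_conv)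
      rw [hΘ_int]
      simpa using this
    exact hmain.congr (fun n => (hΘn_int n).symm)
end

section
/- The correspondence G_α : P(W) ⇉ P(W), G_α(π) = { Θ : Θ ≪ π, dΘ/dπ ≤ (1-α)^{-1} }, is lower hemicontinuous: for any π_n → π weakly and any Θ ∈ G_α(π), there exist Θ_n ∈ G_α(π_n) with Θ_n → Θ weakly. -/
open MeasureTheory Filter Set BoundedContinuousFunction

open scoped ENNReal NNReal Topology

private lemma stmt15_dens_nonneg {W : Type*} [TopologicalSpace W] (h : W →ᵇ ℝ)
    (h0 : ∀ w, 0 ≤ h w) (c : ℝ) (w : W) :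
    0 ≤ h w / max c 1 + max (1 - c) 0 :=
  add_nonneg (div_nonneg (h0 w) (le_trans zero_le_one (le_max_right c 1))) (le_max_right _ 0)

private lemma stmt15_wd_integral {W : Type*} [TopologicalSpace W] [MeasurableSpace W]
    [OpensMeasurableSpace W] (μ : Measure W) [IsFiniteMeasure μ] (h : W →ᵇ ℝ)
    (h0 : ∀ w, 0 ≤ h w) (c : ℝ) (f : W →ᵇ ℝ) :
    ∫ w, f w ∂(μ.withDensity fun w => ENNReal.ofReal (h w / max c 1 + max (1 - c) 0))
      = ∫ w, (h w / max c 1 + max (1 - c) 0) * f w ∂μ := by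
  have hmeas : Measurable fun w => (h w / max c 1 + max (1 - c) 0).toNNReal :=
    ((h.continuous.div_const _).add continuous_const).measurable.real_toNNReal
  have hrw : (fun w => ENNReal.ofReal (h w / max c 1 + max (1 - c) 0))
      = fun w => ((h w / max c 1 + max (1 - c) 0).toNNReal : ℝ≥0∞) := rfl
  rw [hrw, integral_withDensity_eq_integral_smul hmeas]
  refine integral_congr_ae (Filter.Eventually.of_forall fun w => ?_)
  simp only [NNReal.smul_def, Real.coe_toNNReal _ (stmt15_dens_nonneg h h0 c w), smul_eq_mul]

private lemma stmt15_wd_expand {W : Type*} [TopologicalSpace W] [MeasurableSpace W]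
    [OpensMeasurableSpace W] (μ : Measure W) [IsFiniteMeasure μ] (h f : W →ᵇ ℝ) (c : ℝ) :
    ∫ w, (h w / max c 1 + max (1 - c) 0) * f w ∂μ
      = (max c 1)⁻¹ * ∫ w, (h * f) w ∂μ + max (1 - c) 0 * ∫ w, f w ∂μ := by
  have h1 : ∀ w : W, (h w / max c 1 + max (1 - c) 0) * f w
      = (max c 1)⁻¹ * ((h * f) w) + max (1 - c) 0 * f w := by
    intro w
    simp only [BoundedContinuousFunction.coe_mul, Pi.mul_apply]
    ring
  simp only [h1]
  rw [integral_add (((h * f).integrable μ).const_mul _) ((f.integrable μ).const_mul _),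
    integral_const_mul, integral_const_mul]

private lemma stmt15_wd_prob {W : Type*} [TopologicalSpace W] [MeasurableSpace W]
    [OpensMeasurableSpace W] (μ : Measure W) [IsProbabilityMeasure μ] (h : W →ᵇ ℝ)
    (h0 : ∀ w, 0 ≤ h w) (c : ℝ) (hc : c = ∫ w, h w ∂μ) :
    IsProbabilityMeasure
      (μ.withDensity fun w => ENNReal.ofReal (h w / max c 1 + max (1 - c) 0)) := by
  have hint : Integrable (fun w => h w / max c 1 + max (1 - c) 0) μ :=
    ((h.integrable μ).div_const _).add (integrable_const _)
  constructor
  rw [withDensity_apply _ MeasurableSet.univ, setLIntegral_univ,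
    ← ofReal_integral_eq_lintegral_ofReal hint
      (Filter.Eventually.of_forall fun w => stmt15_dens_nonneg h h0 c w)]
  have hval : ∫ w, (h w / max c 1 + max (1 - c) 0) ∂μ = c / max c 1 + max (1 - c) 0 := by
    rw [integral_add ((h.integrable μ).div_const _) (integrable_const _), integral_div,
      integral_const, probReal_univ, one_smul, ← hc]
  rw [hval]
  rcases le_total c 1 with hc1 | hc1
  · rw [max_eq_right hc1, max_eq_left (by linarith : (0:ℝ) ≤ 1 - c), div_one,
      show c + (1 - c) = 1 by ring, ENNReal.ofReal_one]
  · rw [max_eq_left hc1, max_eq_right (by linarith : 1 - c ≤ (0:ℝ)),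
      div_self (by linarith : c ≠ 0), add_zero, ENNReal.ofReal_one]

private lemma stmt15_diag {X : Type*} [PseudoMetricSpace X] {T : ℕ → ℕ → X} {Λ : ℕ → X} {x : X}
    (h1 : Tendsto Λ atTop (𝓝 x))
    (h2 : ∀ k, Tendsto (fun n => T n k) atTop (𝓝 (Λ k))) :
    ∃ φ : ℕ → ℕ, Tendsto (fun n => T n (φ n)) atTop (𝓝 x) := by
  classical
  have hN : ∀ k : ℕ, ∃ N : ℕ, ∀ n ≥ N, dist (T n k) (Λ k) < 1 / (k + 1) := by
    intro k
    exact Metric.tendsto_atTop.1 (h2 k) (1 / (k + 1)) (by positivity)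
  choose N hNs using hN
  set Mk : ℕ → ℕ := fun k => k + (Finset.range (k + 1)).sup N with hMk
  set φ : ℕ → ℕ := fun n => Nat.findGreatest (fun k => Mk k ≤ n) n with hφ
  have hφ_top : Tendsto φ atTop atTop := by
    refine tendsto_atTop.2 fun K => ?_
    filter_upwards [eventually_ge_atTop (max K (Mk K))] with n hn
    exact Nat.le_findGreatest (le_trans (le_max_left _ _) hn)
      (le_trans (le_max_right _ _) hn)
  have hφ_spec : ∀ n ≥ Mk 0, dist (T n (φ n)) (Λ (φ n)) < 1 / (φ n + 1) := by
    intro n hn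
    have hP : Mk (φ n) ≤ n :=
      Nat.findGreatest_spec (P := fun k => Mk k ≤ n) (Nat.zero_le n) hn
    have hNφ : N (φ n) ≤ n :=
      le_trans (le_trans (Finset.le_sup (Finset.self_mem_range_succ (φ n)))
        (Nat.le_add_left _ _)) hP
    exact hNs (φ n) n hNφ
  refine ⟨φ, ?_⟩
  rw [tendsto_iff_dist_tendsto_zero]
  have hbound : Tendsto (fun n => 1 / ((φ n : ℝ) + 1) + dist (Λ (φ n)) x) atTop (𝓝 0) := by
    have t1 : Tendsto (fun n => 1 / ((φ n : ℝ) + 1)) atTop (𝓝 0) :=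
      tendsto_one_div_add_atTop_nhds_zero_nat.comp hφ_top
    have t2 : Tendsto (fun n => dist (Λ (φ n)) x) atTop (𝓝 0) :=
      (tendsto_iff_dist_tendsto_zero.1 h1).comp hφ_top
    simpa using t1.add t2
  refine squeeze_zero' (Filter.Eventually.of_forall fun n => dist_nonneg) ?_ hbound
  filter_upwards [eventually_ge_atTop (Mk 0)] with n hn
  calc dist (T n (φ n)) x ≤ dist (T n (φ n)) (Λ (φ n)) + dist (Λ (φ n)) x := dist_triangle _ _ _
    _ ≤ 1 / ((φ n : ℝ) + 1) + dist (Λ (φ n)) x := by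
        have := hφ_spec n hn
        linarith [this]

set_option maxHeartbeats 1000000 in
theorem stmt_15 {W : Type*} [TopologicalSpace W] [PolishSpace W]
    [MeasurableSpace W] [BorelSpace W]
    (α : ℝ) (hα : α ∈ Set.Ioo (0:ℝ) 1)
    (πn : ℕ → Measure W) (π : Measure W)
    (hπnprob : ∀ n, IsProbabilityMeasure (πn n)) [IsProbabilityMeasure π]
    (hπconv : ∀ f : W →ᵇ ℝ, Tendsto (fun n => ∫ w, f w ∂(πn n)) atTop (nhds (∫ w, f w ∂π)))
    (Θ : Measure W) [IsProbabilityMeasure Θ]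
    (habs : Θ ≪ π) (hbound : ∀ᵐ w ∂π, Θ.rnDeriv π w ≤ ENNReal.ofReal (1 - α)⁻¹) :
    ∃ Θn : ℕ → Measure W, (∀ n, IsProbabilityMeasure (Θn n)) ∧
      (∀ n, Θn n ≪ πn n) ∧
      (∀ n, ∀ᵐ w ∂(πn n), (Θn n).rnDeriv (πn n) w ≤ ENNReal.ofReal (1 - α)⁻¹) ∧
      ∀ f : W →ᵇ ℝ,
        Tendsto (fun n => ∫ w, f w ∂(Θn n)) atTop (nhds (∫ w, f w ∂Θ)) := by
  classical
  obtain ⟨hα0, hα1⟩ := hα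
  letI := TopologicalSpace.upgradeIsCompletelyMetrizable W
  haveI := fun n => hπnprob n
  set M : ℝ := (1 - α)⁻¹ with hMdef
  have h1α : (0:ℝ) < 1 - α := by linarith
  have hM1 : 1 < M := (one_lt_inv₀ h1α).2 (by linarith)
  have hM0 : 0 < M := lt_trans one_pos hM1
  -- the density g of Θ with respect to π
  set g : W → ℝ := fun w => (Θ.rnDeriv π w).toReal with hgdef
  have hgmeas : Measurable g := (Measure.measurable_rnDeriv Θ π).ennreal_toReal
  have hgnn : ∀ w, 0 ≤ g w := fun w => ENNReal.toReal_nonneg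
  have hgleM : ∀ᵐ w ∂π, g w ≤ M := by
    filter_upwards [hbound] with w hw
    calc g w ≤ (ENNReal.ofReal M).toReal := ENNReal.toReal_mono ENNReal.ofReal_ne_top hw
      _ = M := ENNReal.toReal_ofReal hM0.le
  have hgint : Integrable g π := by
    refine Integrable.mono' (integrable_const M) hgmeas.aestronglyMeasurable ?_
    filter_upwards [hgleM] with w hw
    rw [Real.norm_eq_abs, abs_of_nonneg (hgnn w)]; exact hw
  have hgone : ∫ w, g w ∂π = 1 := by
    rw [hgdef, Measure.integral_toReal_rnDeriv habs, probReal_univ]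
  have hΘint : ∀ f : W →ᵇ ℝ, ∫ w, f w ∂Θ = ∫ w, g w * f w ∂π := by
    intro f
    have h1 : π.withDensity (Θ.rnDeriv π) = Θ := Measure.withDensity_rnDeriv_eq Θ π habs
    have h2 : (fun w => ENNReal.ofReal (g w)) =ᵐ[π] Θ.rnDeriv π :=
      (Measure.rnDeriv_lt_top Θ π).mono fun w hw => ENNReal.ofReal_toReal hw.ne
    calc ∫ w, f w ∂Θ = ∫ w, f w ∂(π.withDensity fun w => ENNReal.ofReal (g w)) := by
          rw [withDensity_congr_ae h2, h1]
      _ = ∫ w, g w * f w ∂π := by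
          rw [show (fun w => ENNReal.ofReal (g w)) = fun w => ((g w).toNNReal : ℝ≥0∞) from rfl,
            integral_withDensity_eq_integral_smul hgmeas.real_toNNReal]
          exact integral_congr_ae (Filter.Eventually.of_forall fun w => by
            simp only [NNReal.smul_def, Real.coe_toNNReal _ (hgnn w), smul_eq_mul])
  -- choice of epsilons
  set ε : ℕ → ℝ := fun k => min ((k + 1 : ℝ))⁻¹ ((M - 1) / 2) with hεdef
  have hεpos : ∀ k, 0 < ε k := fun k => lt_min (by positivity) (by linarith)
  set δ : ℕ → ℝ := fun k => ε k / (M - 1) with hδdef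
  have hδpos : ∀ k, 0 < δ k := fun k => div_pos (hεpos k) (by linarith)
  have hδhalf : ∀ k, δ k ≤ 1 / 2 := by
    intro k
    rw [hδdef, div_le_iff₀ (by linarith : (0:ℝ) < M - 1)]
    have := min_le_right ((k + 1 : ℝ))⁻¹ ((M - 1) / 2)
    have h : ε k ≤ (M - 1) / 2 := this
    linarith
  have hδM : ∀ k, δ k * (M - 1) = ε k := fun k => div_mul_cancel₀ _ (by linarith)
  have hεto0 : Tendsto ε atTop (𝓝 0) := by
    refine squeeze_zero (fun k => (hεpos k).le) (fun k => min_le_left _ _) ?_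
    have : Tendsto (fun k : ℕ => 1 / ((k : ℝ) + 1)) atTop (𝓝 0) :=
      tendsto_one_div_add_atTop_nhds_zero_nat
    simpa [one_div] using this
  have hδto0 : Tendsto δ atTop (𝓝 0) := by
    rw [hδdef]
    simpa using hεto0.div_const (M - 1)
  -- approximating bounded continuous densities
  have happrox : ∀ k : ℕ, ∃ h : W →ᵇ ℝ, (∀ w, 0 ≤ h w) ∧ (∀ w, h w ≤ (1 - δ k) * M) ∧
      ∫ w, |h w - g w| ∂π ≤ ε k / 4 + δ k := by
    intro k
    obtain ⟨h₀, hh₀, -⟩ :=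
      hgint.exists_boundedContinuous_integral_sub_le (ε := ε k / 4) (by have := hεpos k; positivity)
    set q : W →ᵇ ℝ := BoundedContinuousFunction.ofNormedAddCommGroup
      (fun w => (1 - δ k) * max 0 (min (h₀ w) M))
      (by fun_prop) ((1 - δ k) * M)
      (by
        intro w
        have h1 : (0:ℝ) ≤ 1 - δ k := by linarith [hδhalf k]
        have h2 : max 0 (min (h₀ w) M) ≤ M :=
          max_le hM0.le (min_le_right _ _)
        rw [Real.norm_eq_abs, abs_of_nonneg (mul_nonneg h1 (le_max_left 0 _))]
        exact mul_le_mul_of_nonneg_left h2 h1) with hqdef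
    have hqval : ∀ w, q w = (1 - δ k) * max 0 (min (h₀ w) M) := fun w => rfl
    refine ⟨q, ?_, ?_, ?_⟩
    · intro w
      rw [hqval]
      exact mul_nonneg (by linarith [hδhalf k]) (le_max_left 0 _)
    · intro w
      rw [hqval]
      exact mul_le_mul_of_nonneg_left (max_le hM0.le (min_le_right _ _))
        (by linarith [hδhalf k])
    · -- L¹ estimate
      have hptwise : ∀ᵐ w ∂π, |q w - g w| ≤ |g w - h₀ w| + δ k * g w := by
        filter_upwards [hgleM] with w hw
        have hclamp : |max 0 (min (h₀ w) M) - g w| ≤ |h₀ w - g w| := by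
          have hg' : g w = max 0 (min (g w) M) := by
            rw [min_eq_left hw, max_eq_right (hgnn w)]
          calc |max 0 (min (h₀ w) M) - g w|
              = |max (min (h₀ w) M) 0 - max (min (g w) M) 0| := by
                rw [max_comm 0 (min (h₀ w) M)]; nth_rewrite 1 [hg']
                rw [max_comm 0 (min (g w) M)]
            _ ≤ |min (h₀ w) M - min (g w) M| := abs_max_sub_max_le_abs _ _ _
            _ ≤ max |h₀ w - g w| |M - M| := abs_min_sub_min_le_max _ _ _ _
            _ = |h₀ w - g w| := by simp
        have h1 : (0:ℝ) ≤ 1 - δ k := by linarith [hδhalf k]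
        calc |q w - g w|
            = |(1 - δ k) * (max 0 (min (h₀ w) M) - g w) + (- δ k * g w)| := by
              rw [hqval]; ring_nf
          _ ≤ (1 - δ k) * |max 0 (min (h₀ w) M) - g w| + δ k * g w := by
              refine le_trans (abs_add_le _ _) ?_
              rw [abs_mul, abs_mul, abs_of_nonneg h1, abs_neg, abs_of_nonneg (hδpos k).le,
                abs_of_nonneg (hgnn w)]
          _ ≤ |h₀ w - g w| + δ k * g w := by
              have := mul_le_mul_of_nonneg_left hclamp h1
              nlinarith [abs_nonneg (max 0 (min (h₀ w) M) - g w), hδhalf k,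
                abs_nonneg (h₀ w - g w), mul_nonneg (hδpos k).le (abs_nonneg (h₀ w - g w))]
          _ = |g w - h₀ w| + δ k * g w := by rw [abs_sub_comm]
      have hqint : Integrable (fun w => q w - g w) π := (q.integrable π).sub hgint
      have habs_int : Integrable (fun w => |g w - h₀ w|) π := (hgint.sub (h₀.integrable π)).abs
      have hrhsint : Integrable (fun w => |g w - h₀ w| + δ k * g w) π :=
        habs_int.add (hgint.const_mul _)
      calc ∫ w, |q w - g w| ∂π ≤ ∫ w, (|g w - h₀ w| + δ k * g w) ∂π :=
            integral_mono_ae hqint.abs hrhsint hptwise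
        _ = (∫ w, |g w - h₀ w| ∂π) + δ k * ∫ w, g w ∂π := by
            rw [integral_add habs_int (hgint.const_mul _), integral_const_mul]
        _ ≤ ε k / 4 + δ k := by
            rw [hgone, mul_one]
            have : ∫ w, |g w - h₀ w| ∂π ≤ ε k / 4 := by
              refine le_trans (le_of_eq ?_) hh₀
              exact integral_congr_ae (Filter.Eventually.of_forall fun w => by
                simp [Real.norm_eq_abs])
            linarith
  choose hk hk0 hkM hkA using happrox
  -- c values
  set ck : ℕ → ℝ := fun k => ∫ w, hk k w ∂π with hckdef
  set cnk : ℕ → ℕ → ℝ := fun n k => ∫ w, hk k w ∂(πn n) with hcnkdef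
  have hcnk : ∀ k, Tendsto (fun n => cnk n k) atTop (𝓝 (ck k)) := fun k => hπconv (hk k)
  have hckclose : ∀ k, |ck k - 1| ≤ ε k / 4 + δ k := by
    intro k
    have : ck k - 1 = ∫ w, (hk k w - g w) ∂π := by
      rw [integral_sub ((hk k).integrable π) hgint, hgone, hckdef]
    rw [this]
    calc |∫ w, (hk k w - g w) ∂π| ≤ ∫ w, |hk k w - g w| ∂π := by
          simpa [Real.norm_eq_abs] using
            norm_integral_le_integral_norm (μ := π) (fun w => hk k w - g w)
      _ ≤ ε k / 4 + δ k := hkA k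
  -- the condition is eventually satisfied
  have hcond : ∀ k, ∀ᶠ n in atTop, 1 - cnk n k ≤ δ k * M := by
    intro k
    have hlt : 1 - δ k * M < ck k := by
      have h1 : 1 - ck k ≤ ε k / 4 + δ k := by
        have := hckclose k; have := abs_le.1 this; linarith [this.1]
      have h2 : δ k * M = δ k + ε k := by
        have := hδM k; nlinarith [this]
      nlinarith [hεpos k]
    filter_upwards [(hcnk k).eventually_const_lt hlt] with n hn
    linarith
  -- the measures
  set dnk : ℕ → ℕ → W → ℝ≥0∞ := fun n k w =>
    ENNReal.ofReal (hk k w / max (cnk n k) 1 + max (1 - cnk n k) 0) with hdnkdef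
  set ΘNK : ℕ → ℕ → Measure W := fun n k =>
    if 1 - cnk n k ≤ δ k * M then (πn n).withDensity (dnk n k) else πn n with hΘNKdef
  set Λk : ℕ → Measure W := fun k =>
    π.withDensity fun w => ENNReal.ofReal (hk k w / max (ck k) 1 + max (1 - ck k) 0) with hΛkdef
  have hΘNKprob : ∀ n k, IsProbabilityMeasure (ΘNK n k) := by
    intro n k
    simp only [hΘNKdef]
    split_ifs with h
    · exact stmt15_wd_prob (πn n) (hk k) (hk0 k) (cnk n k) rfl
    · exact hπnprob n
  have hΛkprob : ∀ k, IsProbabilityMeasure (Λk k) := fun k =>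
    stmt15_wd_prob π (hk k) (hk0 k) (ck k) rfl
  have hΘNKabs : ∀ n k, ΘNK n k ≪ πn n := by
    intro n k
    simp only [hΘNKdef]
    split_ifs with h
    · exact withDensity_absolutelyContinuous _ _
    · exact Measure.AbsolutelyContinuous.rfl
  have hΘNKbdd : ∀ n k, ∀ᵐ w ∂(πn n), (ΘNK n k).rnDeriv (πn n) w ≤ ENNReal.ofReal M := by
    intro n k
    simp only [hΘNKdef]
    split_ifs with h
    · have hmeas : Measurable (dnk n k) :=
        (((hk k).continuous.div_const _).add continuous_const).measurable.ennreal_ofReal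
      filter_upwards [Measure.rnDeriv_withDensity (πn n) hmeas] with w hw
      rw [hw, hdnkdef]
      refine ENNReal.ofReal_le_ofReal ?_
      have h1 : hk k w / max (cnk n k) 1 ≤ (1 - δ k) * M := by
        refine le_trans (div_le_self (hk0 k w) (le_max_right _ 1)) (hkM k w)
      have h2 : max (1 - cnk n k) 0 ≤ δ k * M :=
        max_le h (mul_nonneg (hδpos k).le hM0.le)
      linarith
    · filter_upwards [Measure.rnDeriv_self (πn n)] with w hw
      rw [hw]
      exact ENNReal.one_le_ofReal.2 hM1.le
  -- convergence for fixed k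
  have hconv_k : ∀ k (f : W →ᵇ ℝ),
      Tendsto (fun n => ∫ w, f w ∂(ΘNK n k)) atTop (𝓝 (∫ w, f w ∂(Λk k))) := by
    intro k f
    have hΛval : ∫ w, f w ∂(Λk k)
        = (max (ck k) 1)⁻¹ * ∫ w, (hk k * f) w ∂π + max (1 - ck k) 0 * ∫ w, f w ∂π := by
      rw [hΛkdef]
      rw [stmt15_wd_integral π (hk k) (hk0 k) (ck k) f, stmt15_wd_expand π (hk k) f (ck k)]
    rw [hΛval]
    have htend : Tendsto (fun n =>
        (max (cnk n k) 1)⁻¹ * ∫ w, (hk k * f) w ∂(πn n)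
          + max (1 - cnk n k) 0 * ∫ w, f w ∂(πn n)) atTop
        (𝓝 ((max (ck k) 1)⁻¹ * ∫ w, (hk k * f) w ∂π + max (1 - ck k) 0 * ∫ w, f w ∂π)) := by
      have hm : Tendsto (fun n => (max (cnk n k) 1)⁻¹) atTop (𝓝 (max (ck k) 1)⁻¹) := by
        refine Tendsto.inv₀ ((hcnk k).max tendsto_const_nhds) ?_
        have : (1:ℝ) ≤ max (ck k) 1 := le_max_right _ _
        linarith
      have hb : Tendsto (fun n => max (1 - cnk n k) 0) atTop (𝓝 (max (1 - ck k) 0)) :=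
        (tendsto_const_nhds.sub (hcnk k)).max tendsto_const_nhds
      exact (hm.mul (hπconv (hk k * f))).add (hb.mul (hπconv f))
    refine Tendsto.congr' ?_ htend
    filter_upwards [hcond k] with n hn
    simp only [hΘNKdef, if_pos hn]
    rw [stmt15_wd_integral (πn n) (hk k) (hk0 k) (cnk n k) f,
      stmt15_wd_expand (πn n) (hk k) f (cnk n k)]
  -- convergence of Λk to Θ
  have hΛconv : ∀ f : W →ᵇ ℝ,
      Tendsto (fun k => ∫ w, f w ∂(Λk k)) atTop (𝓝 (∫ w, f w ∂Θ)) := by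
    intro f
    rw [tendsto_iff_dist_tendsto_zero]
    have hEk : ∀ k, dist (∫ w, f w ∂(Λk k)) (∫ w, f w ∂Θ)
        ≤ ((M + 2) * (ε k / 4 + δ k)) * ‖f‖ := by
      intro k
      set dk : W → ℝ := fun w => hk k w / max (ck k) 1 + max (1 - ck k) 0 with hdkdef
      have hdkint : Integrable dk π :=
        (((hk k).integrable π).div_const _).add (integrable_const _)
      have hΛ : ∫ w, f w ∂(Λk k) = ∫ w, dk w * f w ∂π :=
        stmt15_wd_integral π (hk k) (hk0 k) (ck k) f
      have hΘ : ∫ w, f w ∂Θ = ∫ w, g w * f w ∂π := hΘint f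
      have hdkfint : Integrable (fun w => dk w * f w) π := by
        simpa [mul_comm] using Integrable.bdd_mul hdkint f.continuous.aestronglyMeasurable
          (Filter.Eventually.of_forall fun w => f.norm_coe_le_norm w)
      have hgfint : Integrable (fun w => g w * f w) π := by
        simpa [mul_comm] using Integrable.bdd_mul hgint f.continuous.aestronglyMeasurable
          (Filter.Eventually.of_forall fun w => f.norm_coe_le_norm w)
      set m : ℝ := max (ck k) 1 with hmdef
      set b : ℝ := max (1 - ck k) 0 with hbdef
      set A : ℝ := ε k / 4 + δ k with hAdef
      have hA0 : 0 ≤ A := by have := hεpos k; have := hδpos k; rw [hAdef]; linarith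
      have hm1 : (1:ℝ) ≤ m := le_max_right _ _
      have hm0 : (0:ℝ) < m := lt_of_lt_of_le one_pos hm1
      have hmA : m - 1 ≤ A := by
        rcases le_total (ck k) 1 with hc | hc
        · rw [hmdef, max_eq_right hc]; linarith
        · rw [hmdef, max_eq_left hc]
          have := hckclose k
          have := (abs_le.1 this).2
          rw [hAdef]; linarith
      have hbA : b ≤ A := by
        rcases le_total (ck k) 1 with hc | hc
        · rw [hbdef, max_eq_left (by linarith : (0:ℝ) ≤ 1 - ck k)]
          have := (abs_le.1 (hckclose k)).1
          rw [hAdef]; linarith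
        · rw [hbdef, max_eq_right (by linarith : 1 - ck k ≤ (0:ℝ))]
          exact hA0
      -- pointwise bound on |dk - g|
      have hpt : ∀ w, |dk w - g w| ≤ M * (m - 1) + |hk k w - g w| + b := by
        intro w
        have hinv1 : m⁻¹ ≤ 1 := inv_le_one_of_one_le₀ hm1
        have hinv0 : 0 ≤ m⁻¹ := inv_nonneg.2 hm0.le
        have hkMw : hk k w ≤ M := by
          have := hkM k w
          nlinarith [hδpos k, hM0]
        have hfirst : |hk k w / m - hk k w| ≤ M * (m - 1) := by
          rw [div_eq_mul_inv, show hk k w * m⁻¹ - hk k w = -(hk k w * (1 - m⁻¹)) by ring,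
            abs_neg, abs_of_nonneg (mul_nonneg (hk0 k w) (by linarith))]
          have h1 : 1 - m⁻¹ ≤ m - 1 := by
            nlinarith [mul_inv_cancel₀ hm0.ne', mul_nonneg (sub_nonneg.2 hm1)
              (sub_nonneg.2 hinv1)]
          nlinarith [hk0 k w, mul_nonneg (sub_nonneg.2 hm1) (sub_nonneg.2 hkMw)]
        calc |dk w - g w| = |(hk k w / m - hk k w) + (hk k w - g w) + b| := by
              rw [hdkdef]; ring_nf
          _ ≤ |hk k w / m - hk k w| + |hk k w - g w| + |b| := by
              refine le_trans (abs_add_le _ _) ?_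
              gcongr
              exact abs_add_le _ _
          _ ≤ M * (m - 1) + |hk k w - g w| + b := by
              have hb0 : (0:ℝ) ≤ b := by rw [hbdef]; exact le_max_right _ _
              rw [abs_of_nonneg hb0]
              gcongr
      have hdkgabs : Integrable (fun w => |dk w - g w|) π := (hdkint.sub hgint).abs
      have hhkg_int : Integrable (fun w => |hk k w - g w|) π := (((hk k).integrable π).sub hgint).abs
      have hsum1 : Integrable (fun w => M * (m - 1) + |hk k w - g w|) π :=
        (integrable_const _).add hhkg_int
      have hrhsint : Integrable (fun w => M * (m - 1) + |hk k w - g w| + b) π :=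
        hsum1.add (integrable_const _)
      have hE : ∫ w, |dk w - g w| ∂π ≤ (M + 2) * A := by
        calc ∫ w, |dk w - g w| ∂π ≤ ∫ w, (M * (m - 1) + |hk k w - g w| + b) ∂π :=
              integral_mono hdkgabs hrhsint hpt
          _ = M * (m - 1) + (∫ w, |hk k w - g w| ∂π) + b := by
              rw [integral_add hsum1 (integrable_const _),
                integral_add (integrable_const _) hhkg_int,
                integral_const, integral_const, probReal_univ, one_smul,
                one_smul]
          _ ≤ M * A + A + A := by
              have h1 : M * (m - 1) ≤ M * A := by nlinarith [hM0]
              have h2 : ∫ w, |hk k w - g w| ∂π ≤ A := hkA k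
              linarith
          _ = (M + 2) * A := by ring
      rw [hΛ, hΘ, Real.dist_eq, ← integral_sub hdkfint hgfint]
      calc |∫ w, (dk w * f w - g w * f w) ∂π| ≤ ∫ w, |dk w * f w - g w * f w| ∂π := by
            simpa [Real.norm_eq_abs] using
              norm_integral_le_integral_norm (μ := π) (fun w => dk w * f w - g w * f w)
        _ ≤ ∫ w, |dk w - g w| * ‖f‖ ∂π := by
            refine integral_mono ?_ (hdkgabs.mul_const _) (fun w => ?_)
            · exact (hdkfint.sub hgfint).abs
            · rw [show dk w * f w - g w * f w = (dk w - g w) * f w by ring, abs_mul]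
              exact mul_le_mul_of_nonneg_left
                (by simpa [Real.norm_eq_abs] using f.norm_coe_le_norm w) (abs_nonneg _)
        _ = (∫ w, |dk w - g w| ∂π) * ‖f‖ := integral_mul_const _ _
        _ ≤ ((M + 2) * (ε k / 4 + δ k)) * ‖f‖ := by
            rw [← hAdef]
            exact mul_le_mul_of_nonneg_right hE (norm_nonneg f)
    have hzero : Tendsto (fun k => ((M + 2) * (ε k / 4 + δ k)) * ‖f‖) atTop (𝓝 0) := by
      have h1 : Tendsto (fun k => ε k / 4 + δ k) atTop (𝓝 0) := by
        simpa using (hεto0.div_const 4).add hδto0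
      have h2 : Tendsto (fun k => (M + 2) * (ε k / 4 + δ k)) atTop (𝓝 0) := by
        simpa using h1.const_mul (M + 2)
      simpa using h2.mul_const ‖f‖
    exact squeeze_zero (fun k => dist_nonneg) hEk hzero
  -- diagonalization
  letI : PseudoMetricSpace (ProbabilityMeasure W) :=
    TopologicalSpace.pseudoMetrizableSpacePseudoMetric _
  set PT : ℕ → ℕ → ProbabilityMeasure W := fun n k => ⟨ΘNK n k, hΘNKprob n k⟩ with hPTdef
  set PΛ : ℕ → ProbabilityMeasure W := fun k => ⟨Λk k, hΛkprob k⟩ with hPΛdef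
  set PΘ : ProbabilityMeasure W := ⟨Θ, inferInstance⟩ with hPΘdef
  have h1 : Tendsto PΛ atTop (𝓝 PΘ) :=
    ProbabilityMeasure.tendsto_iff_forall_integral_tendsto.2 fun f => hΛconv f
  have h2 : ∀ k, Tendsto (fun n => PT n k) atTop (𝓝 (PΛ k)) := fun k =>
    ProbabilityMeasure.tendsto_iff_forall_integral_tendsto.2 fun f => hconv_k k f
  obtain ⟨φ, hφ⟩ := stmt15_diag h1 h2
  refine ⟨fun n => ΘNK n (φ n), fun n => hΘNKprob _ _, fun n => hΘNKabs _ _,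
    fun n => hΘNKbdd _ _, fun f => ?_⟩
  exact ProbabilityMeasure.tendsto_iff_forall_integral_tendsto.1 hφ f
end

section
/- Uniform bounds for ES minimizers over couplings: suppose L(x,y) ≤ A(x) + B(y) and L(x,y) ≥ a(x) + b(y) with A, a ∈ L¹(μ), B, b ∈ L¹(ν), and α ∈ (0,1). Then there exist real numbers k* and K* such that for every coupling π of μ and ν, π(L ≥ K*) < 1 - α and π(L > k*) > 1 - α; consequently every minimizer of b ↦ b + (1-α)^{-1} E_π[(L-b)_+] lies in [k*, K*], uniformly over π ∈ Π(μ,ν). -/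
open MeasureTheory Filter Set

lemma tail_aux {Z : Type*} [MeasurableSpace Z] (μ : Measure Z) [IsFiniteMeasure μ]
    {f : Z → ℝ} (hf : Integrable f μ) {ε : ℝ} (hε : 0 < ε) :
    ∃ t : ℝ, μ {z | t ≤ f z} < ENNReal.ofReal ε := by
  set C := ∫⁻ z, ENNReal.ofReal |f z| ∂μ with hC
  have hCfin : C ≠ ⊤ := by
    have h := hf.hasFiniteIntegral
    rw [HasFiniteIntegral] at h
    simp only [← Real.enorm_eq_ofReal_abs] at hC
    rw [hC]
    exact h.ne
  set t : ℝ := C.toReal / ε + 1 with htdef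
  have ht : 0 < t := by positivity
  refine ⟨t, ?_⟩
  have hmeas : AEMeasurable (fun z => ENNReal.ofReal |f z|) μ :=
    hf.abs.1.aemeasurable.ennreal_ofReal
  have hkey : C < ENNReal.ofReal ε * ENNReal.ofReal t := by
    rw [← ENNReal.ofReal_mul hε.le]
    have het : ε * t = C.toReal + ε := by
      rw [htdef, mul_add, mul_div_assoc', mul_comm ε C.toReal, mul_div_assoc, div_self hε.ne', mul_one, mul_one]
    rw [het]
    calc C = ENNReal.ofReal C.toReal := (ENNReal.ofReal_toReal hCfin).symm
      _ < ENNReal.ofReal (C.toReal + ε) := by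
          rw [ENNReal.ofReal_lt_ofReal_iff (by positivity)]
          linarith [ENNReal.toReal_nonneg (a := C)]
  calc μ {z | t ≤ f z}
      ≤ μ {z | ENNReal.ofReal t ≤ ENNReal.ofReal |f z|} :=
        measure_mono (fun z hz => ENNReal.ofReal_le_ofReal (le_trans hz (le_abs_self _)))
    _ ≤ C / ENNReal.ofReal t :=
        meas_ge_le_lintegral_div hmeas (ne_of_gt (ENNReal.ofReal_pos.2 ht)) ENNReal.ofReal_ne_top
    _ < ENNReal.ofReal ε :=
        (ENNReal.div_lt_iff (Or.inl (ne_of_gt (ENNReal.ofReal_pos.2 ht)))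
          (Or.inl ENNReal.ofReal_ne_top)).2 hkey

theorem stmt_16 {X Y : Type*}
    [TopologicalSpace X] [PolishSpace X] [MeasurableSpace X] [BorelSpace X]
    [TopologicalSpace Y] [PolishSpace Y] [MeasurableSpace Y] [BorelSpace Y]
    (μ : Measure X) [IsProbabilityMeasure μ] (ν : Measure Y) [IsProbabilityMeasure ν]
    (L : X × Y → ℝ) (hLmeas : Measurable L)
    (α : ℝ) (hα : α ∈ Set.Ioo (0:ℝ) 1)
    (A : X → ℝ) (B : Y → ℝ) (a₀ : X → ℝ) (b₀ : Y → ℝ)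
    (hA : Integrable A μ) (hB : Integrable B ν) (ha₀ : Integrable a₀ μ) (hb₀ : Integrable b₀ ν)
    (hub : ∀ x y, L (x, y) ≤ A x + B y) (hlb : ∀ x y, a₀ x + b₀ y ≤ L (x, y)) :
    ∃ k K : ℝ, ∀ π : Measure (X × Y), IsProbabilityMeasure π →
      π.map Prod.fst = μ → π.map Prod.snd = ν →
      (π {w | K ≤ L w} < ENNReal.ofReal (1 - α)) ∧
      (ENNReal.ofReal (1 - α) < π {w | k < L w}) ∧
      (∀ b : ℝ,
        (∀ b' : ℝ, b + (1 - α)⁻¹ * ∫ w, max (L w - b) 0 ∂π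
            ≤ b' + (1 - α)⁻¹ * ∫ w, max (L w - b') 0 ∂π) →
        b ∈ Set.Icc k K) := by
  obtain ⟨hα0, hα1⟩ := hα
  have hc : (0:ℝ) < 1 - α := by linarith
  obtain ⟨tA, htA⟩ := tail_aux μ hA (show (0:ℝ) < (1-α)/2 by linarith)
  obtain ⟨tB, htB⟩ := tail_aux ν hB (show (0:ℝ) < (1-α)/2 by linarith)
  obtain ⟨sA, hsA⟩ := tail_aux μ ha₀.neg (show (0:ℝ) < α/2 by linarith)
  obtain ⟨sB, hsB⟩ := tail_aux ν hb₀.neg (show (0:ℝ) < α/2 by linarith)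
  set k : ℝ := -sA + -sB with hkdef
  set K : ℝ := tA + tB with hKdef
  refine ⟨k, K, ?_⟩
  intro π hπ hfst hsnd
  haveI := hπ
  -- Part 1
  have h1 : π {w | K ≤ L w} < ENNReal.ofReal (1 - α) := by
    have hsub : {w : X × Y | K ≤ L w} ⊆
        (Prod.fst ⁻¹' {x | tA ≤ A x}) ∪ (Prod.snd ⁻¹' {y | tB ≤ B y}) := by
      intro w hw
      by_contra hcon
      simp only [Set.mem_union, Set.mem_preimage, Set.mem_setOf_eq, not_or, not_le] at hcon
      have h := hub w.1 w.2
      simp only [Set.mem_setOf_eq, hKdef] at hw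
      rw [Prod.mk.eta] at h
      linarith [hcon.1, hcon.2]
    calc π {w | K ≤ L w}
        ≤ π ((Prod.fst ⁻¹' {x | tA ≤ A x}) ∪ (Prod.snd ⁻¹' {y | tB ≤ B y})) :=
          measure_mono hsub
      _ ≤ π (Prod.fst ⁻¹' {x | tA ≤ A x}) + π (Prod.snd ⁻¹' {y | tB ≤ B y}) :=
          measure_union_le _ _
      _ ≤ μ {x | tA ≤ A x} + ν {y | tB ≤ B y} := by
          refine add_le_add ?_ ?_
          · rw [← hfst]; exact Measure.le_map_apply measurable_fst.aemeasurable _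
          · rw [← hsnd]; exact Measure.le_map_apply measurable_snd.aemeasurable _
      _ < ENNReal.ofReal ((1-α)/2) + ENNReal.ofReal ((1-α)/2) := ENNReal.add_lt_add htA htB
      _ = ENNReal.ofReal (1-α) := by
          rw [← ENNReal.ofReal_add (by linarith) (by linarith)]; ring_nf
  -- Part 2
  have hS'lt : π {w | L w ≤ k} < ENNReal.ofReal α := by
    have hsub : {w : X × Y | L w ≤ k} ⊆
        (Prod.fst ⁻¹' {x | sA ≤ -a₀ x}) ∪ (Prod.snd ⁻¹' {y | sB ≤ -b₀ y}) := by
      intro w hw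
      by_contra hcon
      simp only [Set.mem_union, Set.mem_preimage, Set.mem_setOf_eq, not_or, not_le] at hcon
      have h := hlb w.1 w.2
      simp only [Set.mem_setOf_eq, hkdef] at hw
      rw [Prod.mk.eta] at h
      linarith [hcon.1, hcon.2]
    calc π {w | L w ≤ k}
        ≤ π ((Prod.fst ⁻¹' {x | sA ≤ -a₀ x}) ∪ (Prod.snd ⁻¹' {y | sB ≤ -b₀ y})) :=
          measure_mono hsub
      _ ≤ π (Prod.fst ⁻¹' {x | sA ≤ -a₀ x}) + π (Prod.snd ⁻¹' {y | sB ≤ -b₀ y}) :=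
          measure_union_le _ _
      _ ≤ μ {x | sA ≤ -a₀ x} + ν {y | sB ≤ -b₀ y} := by
          refine add_le_add ?_ ?_
          · rw [← hfst]; exact Measure.le_map_apply measurable_fst.aemeasurable _
          · rw [← hsnd]; exact Measure.le_map_apply measurable_snd.aemeasurable _
      _ < ENNReal.ofReal (α/2) + ENNReal.ofReal (α/2) := ENNReal.add_lt_add hsA hsB
      _ = ENNReal.ofReal α := by
          rw [← ENNReal.ofReal_add (by linarith) (by linarith)]; ring_nf
  have h2 : ENNReal.ofReal (1 - α) < π {w | k < L w} := by
    have hcompl : {w : X × Y | k < L w} = {w | L w ≤ k}ᶜ := by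
      ext w; simp [not_le]
    rw [hcompl, prob_compl_eq_one_sub (measurableSet_le hLmeas measurable_const)]
    by_contra hcon
    push_neg at hcon
    have h1' : (1:ENNReal) ≤ π {w : X × Y | L w ≤ k} + ENNReal.ofReal (1-α) := tsub_le_iff_left.1 hcon
    have h2' : π {w : X × Y | L w ≤ k} + ENNReal.ofReal (1-α)
        < ENNReal.ofReal α + ENNReal.ofReal (1-α) :=
      ENNReal.add_lt_add_right ENNReal.ofReal_ne_top hS'lt
    rw [← ENNReal.ofReal_add (by linarith) (by linarith)] at h2'
    have : α + (1 - α) = (1:ℝ) := by ring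
    rw [this, ENNReal.ofReal_one] at h2'
    exact absurd (lt_of_le_of_lt h1' h2') (lt_irrefl _)
  refine ⟨h1, h2, ?_⟩
  -- Part 3: integrability
  have hAπ : Integrable (fun w : X × Y => A w.1) π := by
    have h1' : Integrable A (π.map Prod.fst) := by rw [hfst]; exact hA
    exact (integrable_map_measure (by rw [hfst]; exact hA.1)
      measurable_fst.aemeasurable).1 h1'
  have hBπ : Integrable (fun w : X × Y => B w.2) π := by
    have h1' : Integrable B (π.map Prod.snd) := by rw [hsnd]; exact hB
    exact (integrable_map_measure (by rw [hsnd]; exact hB.1)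
      measurable_snd.aemeasurable).1 h1'
  have haπ : Integrable (fun w : X × Y => a₀ w.1) π := by
    have h1' : Integrable a₀ (π.map Prod.fst) := by rw [hfst]; exact ha₀
    exact (integrable_map_measure (by rw [hfst]; exact ha₀.1)
      measurable_fst.aemeasurable).1 h1'
  have hbπ : Integrable (fun w : X × Y => b₀ w.2) π := by
    have h1' : Integrable b₀ (π.map Prod.snd) := by rw [hsnd]; exact hb₀
    exact (integrable_map_measure (by rw [hsnd]; exact hb₀.1)
      measurable_snd.aemeasurable).1 h1'
  have hLπ : Integrable L π := by
    refine Integrable.mono' (((hAπ.add hBπ).abs).add ((haπ.add hbπ).abs))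
      hLmeas.aestronglyMeasurable (Filter.Eventually.of_forall fun w => ?_)
    have h1' := hub w.1 w.2
    have h2' := hlb w.1 w.2
    rw [Prod.mk.eta] at h1' h2'
    rw [Real.norm_eq_abs, abs_le]
    constructor
    · have := neg_abs_le (a₀ w.1 + b₀ w.2)
      have := abs_nonneg (A w.1 + B w.2)
      simp only [Pi.add_apply]
      linarith
    · have := le_abs_self (A w.1 + B w.2)
      have := abs_nonneg (a₀ w.1 + b₀ w.2)
      simp only [Pi.add_apply]
      linarith
  have hI : ∀ c : ℝ, Integrable (fun w => max (L w - c) 0) π := fun c =>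
    (hLπ.sub (integrable_const c)).pos_part
  intro b hb
  constructor
  · -- k ≤ b
    by_contra hblt
    push_neg at hblt
    have hbk := hb k
    have hS : MeasurableSet {w : X × Y | k < L w} := measurableSet_lt measurable_const hLmeas
    have hind : Integrable ({w : X × Y | k < L w}.indicator (fun _ => k - b)) π :=
      (integrable_const (k - b)).indicator hS
    have hptwise : ∀ w, ({w : X × Y | k < L w}.indicator (fun _ => k - b)) w
        ≤ max (L w - b) 0 - max (L w - k) 0 := by
      intro w
      simp only [Set.indicator_apply, Set.mem_setOf_eq]
      by_cases h : k < L w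
      · rw [if_pos h,
          max_eq_left (show (0:ℝ) ≤ L w - b by linarith),
          max_eq_left (show (0:ℝ) ≤ L w - k by linarith)]
        linarith
      · rw [if_neg h]
        have h' := not_lt.1 h
        rw [max_eq_right (show L w - k ≤ (0:ℝ) by linarith)]
        have := le_max_right (L w - b) (0:ℝ)
        linarith
    have hint : (π {w | k < L w}).toReal * (k - b)
        ≤ (∫ w, max (L w - b) 0 ∂π) - ∫ w, max (L w - k) 0 ∂π := by
      have h1' := integral_mono hind ((hI b).sub (hI k)) hptwise
      rw [integral_indicator_const _ hS] at h1'
      simp only [Pi.sub_apply] at h1'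
      rw [integral_sub (hI b) (hI k)] at h1'
      simpa [smul_eq_mul, measureReal_def] using h1'
    have hp : 1 - α < (π {w | k < L w}).toReal := by
      rw [← ENNReal.ofReal_lt_iff_lt_toReal (by linarith) (measure_ne_top π _)]
      exact h2
    have hub' : (∫ w, max (L w - b) 0 ∂π) - (∫ w, max (L w - k) 0 ∂π)
        ≤ (1 - α) * (k - b) := by
      have hm := mul_le_mul_of_nonneg_left hbk hc.le
      have e1 : (1 - α) * ((1 - α)⁻¹ * (∫ w, max (L w - b) 0 ∂π))
          = ∫ w, max (L w - b) 0 ∂π := by field_simp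
      have e2 : (1 - α) * ((1 - α)⁻¹ * (∫ w, max (L w - k) 0 ∂π))
          = ∫ w, max (L w - k) 0 ∂π := by field_simp
      rw [mul_add, mul_add, e1, e2] at hm
      nlinarith
    nlinarith [mul_lt_mul_of_pos_right hp (show (0:ℝ) < k - b by linarith)]
  · -- b ≤ K
    by_contra hblt
    push_neg at hblt
    have hbK := hb K
    have hS : MeasurableSet {w : X × Y | K ≤ L w} := measurableSet_le measurable_const hLmeas
    have hind : Integrable ({w : X × Y | K ≤ L w}.indicator (fun _ => b - K)) π :=
      (integrable_const (b - K)).indicator hS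
    have hptwise : ∀ w, max (L w - K) 0 - max (L w - b) 0
        ≤ ({w : X × Y | K ≤ L w}.indicator (fun _ => b - K)) w := by
      intro w
      simp only [Set.indicator_apply, Set.mem_setOf_eq]
      by_cases h : K ≤ L w
      · rw [if_pos h, max_eq_left (show (0:ℝ) ≤ L w - K by linarith)]
        have := le_max_left (L w - b) (0:ℝ)
        linarith
      · rw [if_neg h]
        have h' := not_le.1 h
        rw [max_eq_right (show L w - K ≤ (0:ℝ) by linarith)]
        have := le_max_right (L w - b) (0:ℝ)
        linarith
    have hint : (∫ w, max (L w - K) 0 ∂π) - ∫ w, max (L w - b) 0 ∂π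
        ≤ (π {w | K ≤ L w}).toReal * (b - K) := by
      have h1' := integral_mono ((hI K).sub (hI b)) hind hptwise
      rw [integral_indicator_const _ hS] at h1'
      simp only [Pi.sub_apply] at h1'
      rw [integral_sub (hI K) (hI b)] at h1'
      simpa [smul_eq_mul, measureReal_def] using h1'
    have hq : (π {w | K ≤ L w}).toReal < 1 - α := by
      rw [← ENNReal.lt_ofReal_iff_toReal_lt (measure_ne_top π _)]
      exact h1
    have hlb' : (1 - α) * (b - K)
        ≤ (∫ w, max (L w - K) 0 ∂π) - ∫ w, max (L w - b) 0 ∂π := by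
      have hm := mul_le_mul_of_nonneg_left hbK hc.le
      have e1 : (1 - α) * ((1 - α)⁻¹ * (∫ w, max (L w - b) 0 ∂π))
          = ∫ w, max (L w - b) 0 ∂π := by field_simp
      have e2 : (1 - α) * ((1 - α)⁻¹ * (∫ w, max (L w - K) 0 ∂π))
          = ∫ w, max (L w - K) 0 ∂π := by field_simp
      rw [mul_add, mul_add, e1, e2] at hm
      nlinarith
    nlinarith [mul_lt_mul_of_pos_right hq (show (0:ℝ) < b - K by linarith),
      (π {w | K ≤ L w}).toReal]
end

section
/- Stability of spectral risk measures under Wasserstein perturbation and L¹ perturbation of the loss: if π_n, π ∈ P_r(W), each L_n : W → ℝ is Hölder continuous with exponent q ≤ 1 and constant C_q independent of n, L_n ∈ L¹(π_n) ∩ L¹(π), L_n → L in L¹(π), and W_r(π_n, π) → 0, then R_{π_n,σ}(L_n) → R_{π,σ}(L), with the quantitative bound |R_{π_n,σ}(L_n) - R_{π,σ}(L)| ≤ C_q W_r(π, π_n) ‖σ‖_{r_q} + ‖L_n - L‖_{L¹(π)} ‖σ‖_∞, where r_q ≥ r/(r-q). -/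
open MeasureTheory Filter Set

/-- The `r`-Wasserstein distance between two probability measures on a metric space,
defined via the optimal transport (coupling) formulation. -/
noncomputable def wassersteinDist {W : Type*} [MeasurableSpace W] [PseudoMetricSpace W]
    (r : ℝ) (π₁ π₂ : Measure W) : ℝ :=
  (sInf {x : ℝ | ∃ m : Measure (W × W), IsProbabilityMeasure m ∧
      m.map Prod.fst = π₁ ∧ m.map Prod.snd = π₂ ∧
      x = ∫ p, dist p.1 p.2 ^ r ∂m}) ^ (1 / r)

/-- The generalized inverse distribution function (quantile function) of `L` under `π`. -/
noncomputable def quantileFn {W : Type*} [MeasurableSpace W]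
    (π : Measure W) (L : W → ℝ) (u : ℝ) : ℝ :=
  sInf {x : ℝ | u ≤ (π {w | L w ≤ x}).toReal}

/-- The spectral risk measure of `L` under `π` with spectral function `σ`. -/
noncomputable def spectralRisk {W : Type*} [MeasurableSpace W]
    (π : Measure W) (L : W → ℝ) (σ : ℝ → ℝ) : ℝ :=
  ∫ u in (0:ℝ)..1, quantileFn π L u * σ u


section AuxLemmas
open scoped ENNReal Topology
variable {W : Type*} [MeasurableSpace W]


lemma xor_set_left (a b : ℝ) : {x : ℝ | ¬ (a ≤ x ↔ b ≤ x)} = Ico (min a b) (max a b) := by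
  ext x
  by_cases h1 : a ≤ x <;> by_cases h2 : b ≤ x <;>
    simp [h1, h2, mem_Ico, min_le_iff, lt_max_iff, not_le.mp, lt_of_not_ge]

lemma xor_set_right (a b : ℝ) : {x : ℝ | ¬ (x ≤ a ↔ x ≤ b)} = Ioc (min a b) (max a b) := by
  ext x
  by_cases h1 : x ≤ a <;> by_cases h2 : x ≤ b <;>
    simp [h1, h2, mem_Ioc, min_lt_iff, le_max_iff, lt_of_not_ge]

lemma lintegral_xor_left (a b : ℝ) :
    ∫⁻ x : ℝ, (if (a ≤ x ↔ b ≤ x) then 0 else 1) = ENNReal.ofReal |a - b| := by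
  have hfun : ∀ x : ℝ, (if (a ≤ x ↔ b ≤ x) then (0:ℝ≥0∞) else 1)
      = (Ico (min a b) (max a b)).indicator (fun _ => (1:ℝ≥0∞)) x := by
    intro x
    have hmem : x ∈ Ico (min a b) (max a b) ↔ ¬ (a ≤ x ↔ b ≤ x) := by
      rw [← xor_set_left a b]; exact Iff.rfl
    by_cases h : a ≤ x ↔ b ≤ x <;> simp [Set.indicator_apply, hmem, h]
  rw [lintegral_congr hfun, lintegral_indicator measurableSet_Ico _, setLIntegral_one,
    Real.volume_Ico, max_sub_min_eq_abs, abs_sub_comm]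

lemma lintegral_xor_right (a b : ℝ) :
    ∫⁻ x : ℝ, (if (x ≤ a ↔ x ≤ b) then 0 else 1) = ENNReal.ofReal |a - b| := by
  have hfun : ∀ x : ℝ, (if (x ≤ a ↔ x ≤ b) then (0:ℝ≥0∞) else 1)
      = (Ioc (min a b) (max a b)).indicator (fun _ => (1:ℝ≥0∞)) x := by
    intro x
    have hmem : x ∈ Ioc (min a b) (max a b) ↔ ¬ (x ≤ a ↔ x ≤ b) := by
      rw [← xor_set_right a b]; exact Iff.rfl
    by_cases h : x ≤ a ↔ x ≤ b <;> simp [Set.indicator_apply, hmem, h]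
  rw [lintegral_congr hfun, lintegral_indicator measurableSet_Ioc _, setLIntegral_one,
    Real.volume_Ioc, max_sub_min_eq_abs, abs_sub_comm]


lemma quantileFn_le_iff (π : Measure W) [IsProbabilityMeasure π] {f : W → ℝ}
    (hf : Measurable f) {u : ℝ} (hu : u ∈ Ioo (0:ℝ) 1) (x : ℝ) :
    quantileFn π f u ≤ x ↔ u ≤ (π {w | f w ≤ x}).toReal := by
  set F : ℝ → ℝ := fun x => (π {w | f w ≤ x}).toReal with hF
  have hFmono : Monotone F := fun x y hxy =>
    ENNReal.toReal_mono (measure_ne_top _ _) (measure_mono fun w hw => le_trans hw hxy)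
  set S : Set ℝ := {x | u ≤ F x} with hS
  have hup : ∀ {x y : ℝ}, x ∈ S → x ≤ y → y ∈ S := fun hx hxy => le_trans hx (hFmono hxy)
  have hne : S.Nonempty := by
    have hmono : Monotone (fun n : ℕ => {w | f w ≤ (n:ℝ)}) := by
      intro m n hmn w hw
      simp only [mem_setOf_eq] at hw ⊢
      exact le_trans hw (by exact_mod_cast hmn)
    have hunion : ⋃ n : ℕ, {w | f w ≤ (n:ℝ)} = univ := by
      ext w; simp only [mem_iUnion, mem_univ, iff_true, mem_setOf_eq]
      obtain ⟨n, hn⟩ := exists_nat_ge (f w); exact ⟨n, hn⟩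
    have htend := tendsto_measure_iUnion_atTop (μ := π) hmono
    rw [hunion, measure_univ] at htend
    have htend' : Tendsto (fun n : ℕ => F (n:ℝ)) atTop (𝓝 1) := by
      have h2 := (ENNReal.tendsto_toReal ENNReal.one_ne_top).comp htend
      exact h2
    obtain ⟨n, hn⟩ := (htend'.eventually_const_le hu.2).exists
    exact ⟨(n:ℝ), hn⟩
  have hbdd : BddBelow S := by
    have hanti : Antitone (fun n : ℕ => {w | f w ≤ -(n:ℝ)}) := by
      intro m n hmn w hw
      simp only [mem_setOf_eq] at hw ⊢
      refine le_trans hw (neg_le_neg ?_)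
      exact_mod_cast hmn
    have hinter : ⋂ n : ℕ, {w | f w ≤ -(n:ℝ)} = (∅ : Set W) := by
      ext w; simp only [mem_iInter, mem_setOf_eq, mem_empty_iff_false, iff_false]
      push_neg
      obtain ⟨n, hn⟩ := exists_nat_gt (-(f w)); exact ⟨n, by linarith⟩
    have htend := tendsto_measure_iInter_atTop (μ := π)
      (fun n => (hf measurableSet_Iic).nullMeasurableSet) hanti ⟨0, measure_ne_top _ _⟩
    have hpre : ∀ c : ℝ, f ⁻¹' Iic c = {w | f w ≤ c} := fun _ => rfl
    simp only [hpre] at htend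
    rw [hinter, measure_empty] at htend
    have htend' : Tendsto (fun n : ℕ => F (-(n:ℝ))) atTop (𝓝 0) := by
      have h2 := (ENNReal.tendsto_toReal ENNReal.zero_ne_top).comp htend
      exact h2
    obtain ⟨n, hn⟩ := (htend'.eventually_lt_const hu.1).exists
    refine ⟨-(n:ℝ), fun y hy => ?_⟩
    by_contra hlt
    push_neg at hlt
    exact absurd (le_trans hy (hFmono hlt.le)) (not_le.mpr hn)
  have hmem : sInf S ∈ S := by
    have happrox : ∀ k : ℕ, sInf S + ((k:ℝ)+1)⁻¹ ∈ S := by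
      intro k
      have hpos : (0:ℝ) < ((k:ℝ)+1)⁻¹ := by positivity
      obtain ⟨y, hyS, hylt⟩ := Real.lt_sInf_add_pos hne hpos
      exact hup hyS hylt.le
    have hinter : ⋂ k : ℕ, {w | f w ≤ sInf S + ((k:ℝ)+1)⁻¹} = {w | f w ≤ sInf S} := by
      ext w; simp only [mem_iInter, mem_setOf_eq]
      constructor
      · intro h
        refine le_of_forall_pos_le_add fun ε hε => ?_
        obtain ⟨k, hk⟩ := exists_nat_one_div_lt hε
        refine le_trans (h k) (add_le_add le_rfl ?_)
        rw [one_div] at hk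
        exact hk.le
      · intro h k
        have : (0:ℝ) ≤ ((k:ℝ)+1)⁻¹ := by positivity
        linarith
    have hanti : Antitone (fun k : ℕ => {w | f w ≤ sInf S + ((k:ℝ)+1)⁻¹}) := by
      intro m n hmn w hw
      simp only [mem_setOf_eq] at hw ⊢
      refine le_trans hw (add_le_add le_rfl ?_)
      have hmn' : (m:ℝ) ≤ (n:ℝ) := by exact_mod_cast hmn
      gcongr
    have htend := tendsto_measure_iInter_atTop (μ := π)
      (fun k => (hf measurableSet_Iic).nullMeasurableSet) hanti ⟨0, measure_ne_top _ _⟩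
    have hpre : ∀ c : ℝ, f ⁻¹' Iic c = {w | f w ≤ c} := fun _ => rfl
    simp only [hpre] at htend
    rw [hinter] at htend
    have hge : ∀ k : ℕ, ENNReal.ofReal u ≤ π {w | f w ≤ sInf S + ((k:ℝ)+1)⁻¹} :=
      fun k => ENNReal.ofReal_le_of_le_toReal (happrox k)
    have hle : ENNReal.ofReal u ≤ π {w | f w ≤ sInf S} :=
      ge_of_tendsto htend (Eventually.of_forall hge)
    have h2 := ENNReal.toReal_mono (measure_ne_top _ _) hle
    rwa [ENNReal.toReal_ofReal hu.1.le] at h2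
  constructor
  · intro h; exact hup hmem h
  · intro h; exact csInf_le hbdd h


lemma key_lintegral_le (π : Measure W) [IsProbabilityMeasure π] {f g : W → ℝ}
    (hf : Measurable f) (hg : Measurable g) :
    ∫⁻ u in Ioo (0:ℝ) 1, ENNReal.ofReal |quantileFn π f u - quantileFn π g u| ≤
      ∫⁻ w, ENNReal.ofReal |f w - g w| ∂π := by
  set F : ℝ → ℝ := fun x => (π {w | f w ≤ x}).toReal with hFdef
  set G : ℝ → ℝ := fun x => (π {w | g w ≤ x}).toReal with hGdef
  have hFmono : Monotone F := fun x y hxy =>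
    ENNReal.toReal_mono (measure_ne_top _ _) (measure_mono fun w hw => le_trans hw hxy)
  have hGmono : Monotone G := fun x y hxy =>
    ENNReal.toReal_mono (measure_ne_top _ _) (measure_mono fun w hw => le_trans hw hxy)
  set D : ℝ → ℝ → ℝ≥0∞ := fun u x => if ((u ≤ F x) ↔ (u ≤ G x)) then 0 else 1 with hDdef
  set E : W → ℝ → ℝ≥0∞ := fun w x => if ((f w ≤ x) ↔ (g w ≤ x)) then 0 else 1 with hEdef
  have hDmeas : Measurable (Function.uncurry D) := by
    have h1 : MeasurableSet {p : ℝ × ℝ | p.1 ≤ F p.2} :=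
      measurableSet_le measurable_fst (hFmono.measurable.comp measurable_snd)
    have h2 : MeasurableSet {p : ℝ × ℝ | p.1 ≤ G p.2} :=
      measurableSet_le measurable_fst (hGmono.measurable.comp measurable_snd)
    have h3 : MeasurableSet {p : ℝ × ℝ | (p.1 ≤ F p.2) ↔ (p.1 ≤ G p.2)} := by
      have heq : {p : ℝ × ℝ | (p.1 ≤ F p.2) ↔ (p.1 ≤ G p.2)} =
          ({p : ℝ × ℝ | p.1 ≤ F p.2} ∩ {p | p.1 ≤ G p.2}) ∪
          ({p : ℝ × ℝ | p.1 ≤ F p.2}ᶜ ∩ {p | p.1 ≤ G p.2}ᶜ) := by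
        ext p
        by_cases hp1 : p.1 ≤ F p.2 <;> by_cases hp2 : p.1 ≤ G p.2 <;>
          simp [hp1, hp2]
      rw [heq]; exact (h1.inter h2).union (h1.compl.inter h2.compl)
    exact Measurable.ite h3 measurable_const measurable_const
  have hEmeas : Measurable (Function.uncurry E) := by
    have h1 : MeasurableSet {p : W × ℝ | f p.1 ≤ p.2} :=
      measurableSet_le (hf.comp measurable_fst) measurable_snd
    have h2 : MeasurableSet {p : W × ℝ | g p.1 ≤ p.2} :=
      measurableSet_le (hg.comp measurable_fst) measurable_snd
    have h3 : MeasurableSet {p : W × ℝ | (f p.1 ≤ p.2) ↔ (g p.1 ≤ p.2)} := by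
      have heq : {p : W × ℝ | (f p.1 ≤ p.2) ↔ (g p.1 ≤ p.2)} =
          ({p : W × ℝ | f p.1 ≤ p.2} ∩ {p | g p.1 ≤ p.2}) ∪
          ({p : W × ℝ | f p.1 ≤ p.2}ᶜ ∩ {p | g p.1 ≤ p.2}ᶜ) := by
        ext p
        by_cases hp1 : f p.1 ≤ p.2 <;> by_cases hp2 : g p.1 ≤ p.2 <;>
          simp [hp1, hp2]
      rw [heq]; exact (h1.inter h2).union (h1.compl.inter h2.compl)
    exact Measurable.ite h3 measurable_const measurable_const
  have stepA : ∀ u ∈ Ioo (0:ℝ) 1,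
      ∫⁻ x, D u x = ENNReal.ofReal |quantileFn π f u - quantileFn π g u| := by
    intro u hu
    have h1 : ∀ x : ℝ, D u x =
        (if (quantileFn π f u ≤ x ↔ quantileFn π g u ≤ x) then 0 else 1) := by
      intro x
      have e1 := quantileFn_le_iff π hf hu x
      have e2 := quantileFn_le_iff π hg hu x
      have hiff : ((u ≤ F x) ↔ (u ≤ G x)) =
          ((quantileFn π f u ≤ x) ↔ (quantileFn π g u ≤ x)) := by
        rw [eq_iff_iff]; exact iff_congr e1.symm e2.symm
      simp only [hDdef, hiff]
    rw [lintegral_congr h1, lintegral_xor_left]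
  have stepB : ∀ x : ℝ, ∫⁻ u in Ioo (0:ℝ) 1, D u x ≤ ENNReal.ofReal |F x - G x| :=
    fun x => le_trans (setLIntegral_le_lintegral _ _) (le_of_eq (lintegral_xor_right (F x) (G x)))
  have stepC : ∀ x : ℝ, ENNReal.ofReal |F x - G x| ≤ ∫⁻ w, E w x ∂π := by
    intro x
    set Sx : Set W := {w | ¬ ((f w ≤ x) ↔ (g w ≤ x))} with hSx
    have hmA : MeasurableSet {w | f w ≤ x} := hf measurableSet_Iic
    have hmB : MeasurableSet {w | g w ≤ x} := hg measurableSet_Iic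
    have hsub1 : {w | f w ≤ x} \ {w | g w ≤ x} ⊆ Sx := by
      intro w hw; simp only [mem_diff, mem_setOf_eq] at hw ⊢; tauto
    have hsub2 : {w | g w ≤ x} \ {w | f w ≤ x} ⊆ Sx := by
      intro w hw; simp only [mem_diff, mem_setOf_eq] at hw ⊢; tauto
    have hmS : MeasurableSet Sx := by
      have heq : Sx = ({w | f w ≤ x} \ {w | g w ≤ x}) ∪ ({w | g w ≤ x} \ {w | f w ≤ x}) := by
        ext w; by_cases h1 : f w ≤ x <;> by_cases h2 : g w ≤ x <;> simp [hSx, h1, h2]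
      rw [heq]; exact (hmA.diff hmB).union (hmB.diff hmA)
    have hE : ∫⁻ w, E w x ∂π = π Sx := by
      have hpt : ∀ w, E w x = Sx.indicator (fun _ => (1:ℝ≥0∞)) w := by
        intro w
        by_cases h : (f w ≤ x) ↔ (g w ≤ x) <;>
          simp [hEdef, Set.indicator_apply, hSx, h]
      rw [lintegral_congr hpt, lintegral_indicator hmS, setLIntegral_one]
    rw [hE]
    refine ENNReal.ofReal_le_of_le_toReal ?_
    rw [abs_sub_le_iff]
    have key : ∀ (A B : Set W), A \ B ⊆ Sx →
        (π A).toReal - (π B).toReal ≤ (π Sx).toReal := by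
      intro A B hsub
      have h1 : π A ≤ π B + π (A \ B) := by
        refine le_trans (measure_mono ?_) (measure_union_le _ _)
        intro w hw
        by_cases h : w ∈ B
        · exact Or.inl h
        · exact Or.inr ⟨hw, h⟩
      have h2 : (π A).toReal ≤ (π B).toReal + (π (A \ B)).toReal := by
        have := ENNReal.toReal_mono (by finiteness) h1
        rwa [ENNReal.toReal_add (measure_ne_top _ _) (measure_ne_top _ _)] at this
      have h3 : (π (A \ B)).toReal ≤ (π Sx).toReal :=
        ENNReal.toReal_mono (measure_ne_top _ _) (measure_mono hsub)
      linarith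
    exact ⟨key _ _ hsub1, key _ _ hsub2⟩
  have stepD : ∀ w, ∫⁻ x, E w x = ENNReal.ofReal |f w - g w| :=
    fun w => lintegral_xor_left (f w) (g w)
  calc ∫⁻ u in Ioo (0:ℝ) 1, ENNReal.ofReal |quantileFn π f u - quantileFn π g u|
      = ∫⁻ u in Ioo (0:ℝ) 1, ∫⁻ x, D u x := by
        refine setLIntegral_congr_fun measurableSet_Ioo (fun u hu => ?_)
        exact (stepA u hu).symm
    _ = ∫⁻ x, ∫⁻ u in Ioo (0:ℝ) 1, D u x := lintegral_lintegral_swap hDmeas.aemeasurable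
    _ ≤ ∫⁻ x, ∫⁻ w, E w x ∂π := lintegral_mono fun x => le_trans (stepB x) (stepC x)
    _ = ∫⁻ w, (∫⁻ x, E w x) ∂π := (lintegral_lintegral_swap hEmeas.aemeasurable).symm
    _ = ∫⁻ w, ENNReal.ofReal |f w - g w| ∂π := lintegral_congr fun w => stepD w


lemma quantileFn_zero (π : Measure W) [IsProbabilityMeasure π] {u : ℝ}
    (hu : u ∈ Ioo (0:ℝ) 1) : quantileFn π (fun _ => (0:ℝ)) u = 0 := by
  have hset : {x : ℝ | u ≤ (π {w | (0:ℝ) ≤ x}).toReal} = Ici (0:ℝ) := by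
    ext x
    rcases le_or_gt 0 x with hx | hx
    · have : {w : W | (0:ℝ) ≤ x} = univ := by ext w; simp [hx]
      simp [this, hx, hu.2.le]
    · have : {w : W | (0:ℝ) ≤ x} = (∅ : Set W) := by ext w; simp [not_le.mpr hx]
      simp [this, hx, not_le.mpr hx, hu.1.not_ge, hu.1]
  rw [quantileFn, hset, csInf_Ici]

lemma quantileFn_monoOn (π : Measure W) [IsProbabilityMeasure π] {f : W → ℝ}
    (hf : Measurable f) : MonotoneOn (quantileFn π f) (Ioo (0:ℝ) 1) := by
  intro u hu v hv huv
  exact (quantileFn_le_iff π hf hu (quantileFn π f v)).mpr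
    (le_trans huv ((quantileFn_le_iff π hf hv (quantileFn π f v)).mp le_rfl))

lemma quantileFn_aemeas (π : Measure W) [IsProbabilityMeasure π] {f : W → ℝ}
    (hf : Measurable f) :
    AEMeasurable (quantileFn π f) (volume.restrict (Ioo (0:ℝ) 1)) :=
  aemeasurable_restrict_of_monotoneOn measurableSet_Ioo (quantileFn_monoOn π hf)

lemma quantile_lintegral_abs_le (π : Measure W) [IsProbabilityMeasure π] {f : W → ℝ}
    (hf : Measurable f) :
    ∫⁻ u in Ioo (0:ℝ) 1, ENNReal.ofReal |quantileFn π f u| ≤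
      ∫⁻ w, ENNReal.ofReal |f w| ∂π := by
  have h0 : Measurable (fun _ : W => (0:ℝ)) := measurable_const
  have hcongr : ∀ u ∈ Ioo (0:ℝ) 1,
      ENNReal.ofReal |quantileFn π f u| =
        ENNReal.ofReal |quantileFn π f u - quantileFn π (fun _ => (0:ℝ)) u| := by
    intro u hu; rw [quantileFn_zero π hu, sub_zero]
  calc ∫⁻ u in Ioo (0:ℝ) 1, ENNReal.ofReal |quantileFn π f u|
      = ∫⁻ u in Ioo (0:ℝ) 1,
          ENNReal.ofReal |quantileFn π f u - quantileFn π (fun _ => (0:ℝ)) u| :=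
        setLIntegral_congr_fun measurableSet_Ioo hcongr
    _ ≤ ∫⁻ w, ENNReal.ofReal |f w - 0| ∂π := key_lintegral_le π hf h0
    _ = ∫⁻ w, ENNReal.ofReal |f w| ∂π := by simp

lemma integrableOn_quantileFn (π : Measure W) [IsProbabilityMeasure π] {f : W → ℝ}
    (hf : Measurable f) (hfi : Integrable f π) :
    IntegrableOn (quantileFn π f) (Ioo (0:ℝ) 1) := by
  refine ⟨(quantileFn_aemeas π hf).aestronglyMeasurable, ?_⟩
  rw [hasFiniteIntegral_iff_norm]
  have h1 : ∫⁻ u in Ioo (0:ℝ) 1, ENNReal.ofReal ‖quantileFn π f u‖ ≤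
      ∫⁻ w, ENNReal.ofReal |f w| ∂π := by
    simpa [Real.norm_eq_abs] using quantile_lintegral_abs_le π hf
  refine lt_of_le_of_lt h1 ?_
  have h2 : ∫⁻ w, ENNReal.ofReal |f w| ∂π = ENNReal.ofReal (∫ w, |f w| ∂π) :=
    (ofReal_integral_eq_lintegral_ofReal hfi.abs (ae_of_all _ fun w => abs_nonneg _)).symm
  rw [h2]; exact ENNReal.ofReal_lt_top


lemma spectral_diff_bound (π : Measure W) [IsProbabilityMeasure π] {f g : W → ℝ}
    (hf : Measurable f) (hg : Measurable g)
    (hfi : Integrable f π) (hgi : Integrable g π)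
    (σ : ℝ → ℝ) (Mσ : ℝ)
    (hσ0 : ∀ u ∈ Ico (0:ℝ) 1, 0 ≤ σ u)
    (hσm : MonotoneOn σ (Ico (0:ℝ) 1))
    (hσb : ∀ u ∈ Ico (0:ℝ) 1, σ u ≤ Mσ) :
    |spectralRisk π f σ - spectralRisk π g σ| ≤ (∫ w, |f w - g w| ∂π) * Mσ := by
  have hMσ0 : 0 ≤ Mσ := le_trans (hσ0 0 ⟨le_rfl, one_pos⟩) (hσb 0 ⟨le_rfl, one_pos⟩)
  have hfg : Integrable (fun w => |f w - g w|) π := (hfi.sub hgi).abs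
  -- σ is a.e.-measurable on (0,1)
  have hσae : AEMeasurable σ (volume.restrict (Ioo (0:ℝ) 1)) := by
    have h := aemeasurable_restrict_of_monotoneOn (μ := volume) measurableSet_Ico hσm
    exact h.mono_measure (Measure.restrict_mono Ioo_subset_Ico_self le_rfl)
  have hqfae := quantileFn_aemeas π hf
  have hqgae := quantileFn_aemeas π hg
  have hqfi := integrableOn_quantileFn π hf hfi
  have hqgi := integrableOn_quantileFn π hg hgi
  -- integrability of products
  have hprod : ∀ (h : W → ℝ), Measurable h → Integrable h π →
      IntegrableOn (fun u => quantileFn π h u * σ u) (Ioo (0:ℝ) 1) := by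
    intro h hh hhi
    have hae : AEMeasurable (fun u => quantileFn π h u * σ u)
        (volume.restrict (Ioo (0:ℝ) 1)) := (quantileFn_aemeas π hh).mul hσae
    refine Integrable.mono ((integrableOn_quantileFn π hh hhi).abs.const_mul Mσ)
      hae.aestronglyMeasurable ?_
    filter_upwards [ae_restrict_mem measurableSet_Ioo] with u hu
    have hu' : u ∈ Ico (0:ℝ) 1 := ⟨hu.1.le, hu.2⟩
    have hσu : |σ u| = σ u := abs_of_nonneg (hσ0 u hu')
    rw [Real.norm_eq_abs, Real.norm_eq_abs, abs_mul, hσu, abs_mul, abs_abs,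
      abs_of_nonneg hMσ0, mul_comm]
    exact mul_le_mul_of_nonneg_right (hσb u hu') (abs_nonneg _)
  have hpf := hprod f hf hfi
  have hpg := hprod g hg hgi
  -- integrability of |q_f - q_g|
  have hdiff : IntegrableOn (fun u => quantileFn π f u - quantileFn π g u)
      (Ioo (0:ℝ) 1) := by
    refine ⟨(hqfae.sub hqgae).aestronglyMeasurable, ?_⟩
    rw [hasFiniteIntegral_iff_norm]
    have h1 : ∫⁻ u in Ioo (0:ℝ) 1,
        ENNReal.ofReal ‖quantileFn π f u - quantileFn π g u‖ ≤
        ∫⁻ w, ENNReal.ofReal |f w - g w| ∂π := by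
      simpa [Real.norm_eq_abs] using key_lintegral_le π hf hg
    refine lt_of_le_of_lt h1 ?_
    rw [← ofReal_integral_eq_lintegral_ofReal hfg
      (ae_of_all _ fun w => abs_nonneg _)]
    exact ENNReal.ofReal_lt_top
  -- the quantile L¹ bound
  have hql1 : ∫ u in Ioo (0:ℝ) 1, |quantileFn π f u - quantileFn π g u| ≤
      ∫ w, |f w - g w| ∂π := by
    rw [integral_eq_lintegral_of_nonneg_ae (ae_of_all _ fun u => abs_nonneg _)
      hdiff.abs.aestronglyMeasurable]
    have h1 : ∫⁻ u in Ioo (0:ℝ) 1,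
        ENNReal.ofReal |quantileFn π f u - quantileFn π g u| ≤
        ENNReal.ofReal (∫ w, |f w - g w| ∂π) := by
      rw [ofReal_integral_eq_lintegral_ofReal hfg
        (ae_of_all _ fun w => abs_nonneg _)]
      exact key_lintegral_le π hf hg
    calc (∫⁻ u in Ioo (0:ℝ) 1,
        ENNReal.ofReal |quantileFn π f u - quantileFn π g u|).toReal
        ≤ (ENNReal.ofReal (∫ w, |f w - g w| ∂π)).toReal :=
          ENNReal.toReal_mono ENNReal.ofReal_ne_top h1
      _ = ∫ w, |f w - g w| ∂π :=
          ENNReal.toReal_ofReal (integral_nonneg fun w => abs_nonneg _)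
  -- rewrite the spectral risks as Ioo integrals
  have hrisk : ∀ (h : W → ℝ), spectralRisk π h σ =
      ∫ u in Ioo (0:ℝ) 1, quantileFn π h u * σ u := by
    intro h
    rw [spectralRisk, intervalIntegral.integral_of_le zero_le_one,
      integral_Ioc_eq_integral_Ioo]
  rw [hrisk f, hrisk g, ← integral_sub hpf hpg]
  have hcong : ∫ u in Ioo (0:ℝ) 1,
      (quantileFn π f u * σ u - quantileFn π g u * σ u) =
      ∫ u in Ioo (0:ℝ) 1, (quantileFn π f u - quantileFn π g u) * σ u := by
    congr 1; funext u; ring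
  rw [hcong]
  calc |∫ u in Ioo (0:ℝ) 1, (quantileFn π f u - quantileFn π g u) * σ u|
      ≤ ∫ u in Ioo (0:ℝ) 1, |(quantileFn π f u - quantileFn π g u) * σ u| := by
        have hni := norm_integral_le_integral_norm (μ := volume.restrict (Ioo (0:ℝ) 1))
            (f := fun u => (quantileFn π f u - quantileFn π g u) * σ u)
        simpa only [Real.norm_eq_abs] using hni
    _ ≤ ∫ u in Ioo (0:ℝ) 1, |quantileFn π f u - quantileFn π g u| * Mσ := by
        refine integral_mono_ae ?_ (hdiff.abs.mul_const Mσ) ?_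
        · have : (fun u => |(quantileFn π f u - quantileFn π g u) * σ u|) =
              fun u => |quantileFn π f u * σ u - quantileFn π g u * σ u| := by
            funext u; congr 1; ring
          rw [this]
          exact (hpf.sub hpg).abs
        · filter_upwards [ae_restrict_mem measurableSet_Ioo] with u hu
          have hu' : u ∈ Ico (0:ℝ) 1 := ⟨hu.1.le, hu.2⟩
          rw [abs_mul, abs_of_nonneg (hσ0 u hu')]
          exact mul_le_mul_of_nonneg_left (hσb u hu') (abs_nonneg _)
    _ = (∫ u in Ioo (0:ℝ) 1, |quantileFn π f u - quantileFn π g u|) * Mσ :=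
        integral_mul_const Mσ _
    _ ≤ (∫ w, |f w - g w| ∂π) * Mσ := mul_le_mul_of_nonneg_right hql1 hMσ0

lemma continuous_of_holder {V : Type*} [PseudoMetricSpace V] (f : V → ℝ) (C qe : ℝ)
    (hq : 0 < qe) (h : ∀ w w', |f w - f w'| ≤ C * dist w w' ^ qe) : Continuous f := by
  rw [continuous_iff_continuousAt]
  intro w
  rw [ContinuousAt, tendsto_iff_dist_tendsto_zero]
  have hb : Tendsto (fun w' => C * dist w' w ^ qe) (nhds w) (nhds 0) := by
    have hd : Tendsto (fun w' => dist w' w) (nhds w) (nhds 0) := by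
      simpa using (continuous_id.dist (continuous_const : Continuous fun _ : V => w)).tendsto w
    have hc : ContinuousAt (fun t : ℝ => C * t ^ qe) 0 :=
      continuousAt_const.mul (Real.continuousAt_rpow_const 0 qe (Or.inr hq.le))
    have h2 := hc.tendsto.comp hd
    simpa [Function.comp_def, Real.zero_rpow hq.ne'] using h2
  refine squeeze_zero (fun w' => dist_nonneg) (fun w' => ?_) hb
  rw [Real.dist_eq]
  exact h w' w

lemma quantileFn_congr (π : Measure W) {f g : W → ℝ} (h : f =ᵐ[π] g) :
    quantileFn π f = quantileFn π g := by
  have hx : ∀ x : ℝ, π {w | f w ≤ x} = π {w | g w ≤ x} := by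
    intro x
    apply measure_congr
    rw [Filter.eventuallyEq_set]
    filter_upwards [h] with w hw
    simp [hw]
  funext u
  simp only [quantileFn, hx]

end AuxLemmas

theorem stmt_17 {W : Type*} [MeasurableSpace W] [PseudoMetricSpace W] [BorelSpace W]
    (r q Cq rq : ℝ) (hr : 1 ≤ r) (hq0 : 0 < q) (hq1 : q ≤ 1) (hqr : q < r)
    (hCq : 0 ≤ Cq) (hrq : r / (r - q) ≤ rq)
    -- the spectral function σ : bounded, nonnegative, increasing, ∫σ = 1; Mσ = ‖σ‖_∞
    (σ : ℝ → ℝ) (Mσ : ℝ)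
    (hσ_nonneg : ∀ u ∈ Set.Ico (0:ℝ) 1, 0 ≤ σ u)
    (hσ_mono : MonotoneOn σ (Set.Ico (0:ℝ) 1))
    (hσ_bdd : ∀ u ∈ Set.Ico (0:ℝ) 1, σ u ≤ Mσ)
    (hσ_one : ∫ u in (0:ℝ)..1, σ u = 1)
    -- the measures and losses
    (πn : ℕ → Measure W) (π : Measure W)
    (hπnprob : ∀ n, IsProbabilityMeasure (πn n)) [IsProbabilityMeasure π]
    (w₀ : W)
    (hmomn : ∀ n, Integrable (fun w => dist w w₀ ^ r) (πn n))
    (hmom : Integrable (fun w => dist w w₀ ^ r) π)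
    (Ln : ℕ → W → ℝ) (L : W → ℝ)
    (hHolder : ∀ n w w', |Ln n w - Ln n w'| ≤ Cq * dist w w' ^ q)
    (hLnint : ∀ n, Integrable (Ln n) (πn n) ∧ Integrable (Ln n) π)
    (hLint : Integrable L π)
    (hL1conv : Tendsto (fun n => ∫ w, |Ln n w - L w| ∂π) atTop (nhds 0))
    (hWconv : Tendsto (fun n => wassersteinDist r (πn n) π) atTop (nhds 0))
    -- the Pichler estimate for Hölder losses (assumed)
    (hPichler : ∀ n, |spectralRisk (πn n) (Ln n) σ - spectralRisk π (Ln n) σ|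
        ≤ Cq * wassersteinDist r (πn n) π *
          (∫ u in (0:ℝ)..1, σ u ^ rq) ^ (1 / rq)) :
    (∀ n, |spectralRisk (πn n) (Ln n) σ - spectralRisk π L σ|
        ≤ Cq * wassersteinDist r (πn n) π * (∫ u in (0:ℝ)..1, σ u ^ rq) ^ (1 / rq)
          + (∫ w, |Ln n w - L w| ∂π) * Mσ) ∧
    Tendsto (fun n => spectralRisk (πn n) (Ln n) σ) atTop
      (nhds (spectralRisk π L σ)) := by
  have hLnmeas : ∀ n, Measurable (Ln n) := fun n =>
    (continuous_of_holder (Ln n) Cq q hq0 (fun w w' => hHolder n w w')).measurable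
  have hLsm : AEStronglyMeasurable L π := hLint.aestronglyMeasurable
  set L' := hLsm.mk L with hL'def
  have hLL' : L =ᵐ[π] L' := hLsm.ae_eq_mk
  have hL'meas : Measurable L' := hLsm.stronglyMeasurable_mk.measurable
  have hL'int : Integrable L' π := hLint.congr hLL'
  have hquant : quantileFn π L = quantileFn π L' := quantileFn_congr π hLL'
  have hrisk : spectralRisk π L σ = spectralRisk π L' σ := by
    rw [spectralRisk, spectralRisk, hquant]
  have hL1eq : ∀ n, ∫ w, |Ln n w - L w| ∂π = ∫ w, |Ln n w - L' w| ∂π := fun n =>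
    integral_congr_ae (hLL'.mono fun w hw => by show |Ln n w - L w| = |Ln n w - L' w|; rw [hw])
  have hbound : ∀ n, |spectralRisk π (Ln n) σ - spectralRisk π L σ| ≤
      (∫ w, |Ln n w - L w| ∂π) * Mσ := by
    intro n
    rw [hrisk, hL1eq n]
    exact spectral_diff_bound π (hLnmeas n) hL'meas ((hLnint n).2) hL'int σ Mσ
      hσ_nonneg hσ_mono hσ_bdd
  have hmain : ∀ n, |spectralRisk (πn n) (Ln n) σ - spectralRisk π L σ| ≤
      Cq * wassersteinDist r (πn n) π * (∫ u in (0:ℝ)..1, σ u ^ rq) ^ (1 / rq)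
        + (∫ w, |Ln n w - L w| ∂π) * Mσ := by
    intro n
    calc |spectralRisk (πn n) (Ln n) σ - spectralRisk π L σ|
        ≤ |spectralRisk (πn n) (Ln n) σ - spectralRisk π (Ln n) σ|
          + |spectralRisk π (Ln n) σ - spectralRisk π L σ| := abs_sub_le _ _ _
      _ ≤ _ := add_le_add (hPichler n) (hbound n)
  refine ⟨hmain, ?_⟩
  have hgt : Tendsto (fun n =>
      Cq * wassersteinDist r (πn n) π * (∫ u in (0:ℝ)..1, σ u ^ rq) ^ (1 / rq)
        + (∫ w, |Ln n w - L w| ∂π) * Mσ) atTop (nhds 0) := by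
    have h1 := (hWconv.const_mul Cq).mul_const ((∫ u in (0:ℝ)..1, σ u ^ rq) ^ (1 / rq))
    have h2 := hL1conv.mul_const Mσ
    have h3 := h1.add h2
    simpa using h3
  have hsub : Tendsto (fun n => spectralRisk (πn n) (Ln n) σ - spectralRisk π L σ)
      atTop (nhds 0) :=
    squeeze_zero_norm (fun n => by simpa [Real.norm_eq_abs] using hmain n) hgt
  have hfin := hsub.add (tendsto_const_nhds (x := spectralRisk π L σ))
  simpa using hfin
end

section
/- Finite-dimensional MES duality: for finite sets X = {1,…,N_X}, Y = {1,…,N_Y}, probability vectors μ, ν, loss matrix L, and α ∈ (0,1), the maximum over all (π, Θ) with π a coupling of μ and ν, Θ a probability matrix with 0 ≤ Θ_{ij} ≤ (1-α)^{-1} π_{ij}, of Σ_{ij} L_{ij}Θ_{ij}, equals the minimum over (φ, ψ, ρ, β) with (1-α)(φ_i + ψ_j) ≥ ρ_{ij}, ρ_{ij} + β ≥ L_{ij}, ρ_{ij} ≥ 0, of Σ_i φ_i μ_i + Σ_j ψ_j ν_j + β; moreover both optima are attained. -/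
open Set

open Finset Topology



lemma cone_isClosed {E : Type*} [NormedAddCommGroup E] [NormedSpace ℝ E] :
    ∀ (p : ℕ) (v : Fin p → E),
      IsClosed {x : E | ∃ u : Fin p → ℝ, (∀ j, 0 ≤ u j) ∧ x = ∑ j, u j • v j} := by
  intro p
  induction p with
  | zero =>
    intro v
    have : {x : E | ∃ u : Fin 0 → ℝ, (∀ j, 0 ≤ u j) ∧ x = ∑ j, u j • v j} = {0} := by
      ext x; simp
    rw [this]; exact isClosed_singleton
  | succ n IH =>
    intro v
    by_cases hli : LinearIndependent ℝ v
    · -- simplicial cone: closed embedding of the orthant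
      set T : (Fin (n+1) → ℝ) →ₗ[ℝ] E :=
        { toFun := fun u => ∑ j, u j • v j
          map_add' := by intro u w; simp [add_smul, Finset.sum_add_distrib]
          map_smul' := by intro c u; simp [smul_smul, Finset.smul_sum] } with hT
      have hker : LinearMap.ker T = ⊥ := by
        rw [LinearMap.ker_eq_bot']
        intro u hu
        exact funext (Fintype.linearIndependent_iff.mp hli u hu)
      have hce : Topology.IsClosedEmbedding T := T.isClosedEmbedding_of_injective hker
      have horth : IsClosed {u : Fin (n+1) → ℝ | ∀ j, 0 ≤ u j} := by
        have : {u : Fin (n+1) → ℝ | ∀ j, 0 ≤ u j} = ⋂ j, {u | 0 ≤ u j} := by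
          ext u; simp
        rw [this]
        exact isClosed_iInter fun j => isClosed_le continuous_const (continuous_apply j)
      have himg : {x : E | ∃ u : Fin (n+1) → ℝ, (∀ j, 0 ≤ u j) ∧ x = ∑ j, u j • v j}
          = T '' {u | ∀ j, 0 ≤ u j} := by
        ext x
        constructor
        · rintro ⟨u, hu, rfl⟩; exact ⟨u, hu, rfl⟩
        · rintro ⟨u, hu, rfl⟩; exact ⟨u, hu, rfl⟩
      rw [himg]
      exact hce.isClosedMap _ horth
    · -- dependent: cone is a finite union of cones on subfamilies
      obtain ⟨g, hg0, ⟨j₁, hj₁⟩⟩ := Fintype.not_linearIndependent_iff.mp hli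
      -- get λ with a positive entry
      obtain ⟨l, hl0, jpos, hjpos⟩ :
          ∃ l : Fin (n+1) → ℝ, ∑ j, l j • v j = 0 ∧ ∃ j, 0 < l j := by
        rcases lt_or_gt_of_ne hj₁ with h | h
        · exact ⟨-g, by simpa using hg0, j₁, by simpa using h⟩
        · exact ⟨g, hg0, j₁, h⟩
      have key : {x : E | ∃ u : Fin (n+1) → ℝ, (∀ j, 0 ≤ u j) ∧ x = ∑ j, u j • v j}
          = ⋃ j : Fin (n+1),
            {x : E | ∃ u : Fin n → ℝ, (∀ i, 0 ≤ u i) ∧ x = ∑ i, u i • v (j.succAbove i)} := by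
        ext x
        constructor
        · rintro ⟨u, hu, rfl⟩
          set P : Finset (Fin (n+1)) := Finset.univ.filter (fun j => 0 < l j) with hP
          have hPne : P.Nonempty := ⟨jpos, by simp [hP, hjpos]⟩
          set θ : ℝ := P.inf' hPne (fun j => u j / l j) with hθ
          have hθ0 : 0 ≤ θ := by
            apply Finset.le_inf'
            intro b hb
            have hlb : 0 < l b := by simpa [hP] using hb
            exact div_nonneg (hu b) hlb.le
          obtain ⟨j₀, hj₀P, hj₀⟩ := Finset.exists_mem_eq_inf' hPne (fun j => u j / l j)
          have hlj₀ : 0 < l j₀ := by simpa [hP] using hj₀P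
          set u' : Fin (n+1) → ℝ := fun k => u k - θ * l k with hu'
          have hu'0 : ∀ k, 0 ≤ u' k := by
            intro k
            by_cases hk : 0 < l k
            · have : θ ≤ u k / l k := Finset.inf'_le _ (by simp [hP, hk])
              have := (le_div_iff₀ hk).mp this
              simpa [hu'] using by linarith
            · push_neg at hk
              have : θ * l k ≤ 0 := mul_nonpos_of_nonneg_of_nonpos hθ0 hk
              have := hu k
              simp only [hu']; linarith
          have hu'j₀ : u' j₀ = 0 := by
            have hθv : θ = u j₀ / l j₀ := hj₀
            simp only [hu', hθv]
            field_simp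
            ring
          have hsum : ∑ k, u' k • v k = ∑ k, u k • v k := by
            have : ∑ k, (θ * l k) • v k = 0 := by
              rw [show (fun k => (θ * l k) • v k) = fun k => θ • (l k • v k) by
                    funext k; rw [smul_smul]]
              rw [← Finset.smul_sum, hl0, smul_zero]
            calc ∑ k, u' k • v k = ∑ k, (u k • v k - (θ * l k) • v k) := by
                  simp [hu', sub_smul]
              _ = ∑ k, u k • v k - ∑ k, (θ * l k) • v k := Finset.sum_sub_distrib _ _
              _ = ∑ k, u k • v k := by rw [this, sub_zero]
          refine Set.mem_iUnion.mpr ⟨j₀, ⟨fun i => u' (j₀.succAbove i), fun i => hu'0 _, ?_⟩⟩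
          have := Fin.sum_univ_succAbove (fun k => u' k • v k) j₀
          rw [← hsum, this, hu'j₀, zero_smul, zero_add]
        · intro hx
          obtain ⟨j, u, hu, rfl⟩ := Set.mem_iUnion.mp hx
          refine ⟨(j.insertNth 0 u : Fin (n+1) → ℝ), ?_, ?_⟩
          · intro k
            refine Fin.succAboveCases j ?_ ?_ k
            · simp
            · intro i; simpa using hu i
          · rw [Fin.sum_univ_succAbove (fun k => (j.insertNth (0:ℝ) u : Fin (n+1) → ℝ) k • v k) j]
            simp
      rw [key]
      exact isClosed_iUnion_of_finite fun j => IH (fun i => v (j.succAbove i))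

lemma farkas {ι κ : Type*} [Fintype ι] [DecidableEq ι] [Fintype κ] [DecidableEq κ]
    (a : ι → κ → ℝ) (d : κ → ℝ)
    (h : ¬ ∃ u : ι → ℝ, (∀ j, 0 ≤ u j) ∧ d = ∑ j, u j • a j) :
    ∃ w : κ → ℝ, (∀ j, 0 ≤ ∑ k, a j k * w k) ∧ ∑ k, d k * w k < 0 := by
  classical
  set S : Set (κ → ℝ) := {x | ∃ u : ι → ℝ, (∀ j, 0 ≤ u j) ∧ x = ∑ j, u j • a j} with hS
  -- S is closed: reindex through Fin (card ι)
  have hclosed : IsClosed S := by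
    have e := (Fintype.equivFin ι).symm
    have : S = {x | ∃ u : Fin (Fintype.card ι) → ℝ, (∀ j, 0 ≤ u j) ∧
        x = ∑ j, u j • a (e j)} := by
      ext x
      constructor
      · rintro ⟨u, hu, rfl⟩
        refine ⟨fun j => u (e j), fun j => hu _, ?_⟩
        rw [← Equiv.sum_comp e (fun j => u j • a j)]
      · rintro ⟨u, hu, rfl⟩
        refine ⟨fun j => u (e.symm j), fun j => hu _, ?_⟩
        rw [← Equiv.sum_comp e (fun j => u (e.symm j) • a j)]
        simp
    rw [this]
    exact cone_isClosed _ _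
  have hconv : Convex ℝ S := by
    rintro x ⟨u, hu, rfl⟩ y ⟨u', hu', rfl⟩ s t hs ht hst
    refine ⟨fun j => s * u j + t * u' j,
      fun j => add_nonneg (mul_nonneg hs (hu j)) (mul_nonneg ht (hu' j)), ?_⟩
    simp only [add_smul, mul_smul, Finset.sum_add_distrib, Finset.smul_sum]
  have hd : d ∉ S := by
    intro ⟨u, hu, hd⟩; exact h ⟨u, hu, hd⟩
  obtain ⟨f, u₀, hfd, hfS⟩ := geometric_hahn_banach_point_closed hconv hclosed hd
  have h0S : (0 : κ → ℝ) ∈ S := ⟨0, fun j => le_refl 0, by simp⟩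
  have hu₀ : u₀ < 0 := by simpa using hfS 0 h0S
  -- each generator: 0 ≤ f (a j)
  have hgen : ∀ j, 0 ≤ f (a j) := by
    intro j
    by_contra hneg
    push_neg at hneg
    set t : ℝ := (u₀ - 1) / f (a j) with htdef
    have ht : 0 < t := div_pos_iff.mpr (Or.inr ⟨by linarith, hneg⟩)
    have hmem : t • a j ∈ S := by
      refine ⟨fun j' => if j' = j then t else 0, fun j' => by dsimp; split <;> simp [ht.le], ?_⟩
      simp [ite_smul, Finset.sum_ite_eq']
    have := hfS _ hmem
    rw [map_smul] at this
    have : u₀ < u₀ - 1 := by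
      have : t * f (a j) = u₀ - 1 := div_mul_cancel₀ _ (ne_of_lt hneg)
      simp only [smul_eq_mul] at *
      linarith [hfS _ hmem, this]
    linarith
  have hrep : ∀ z : κ → ℝ, f z = ∑ k, z k * f (fun j' => if k = j' then (1:ℝ) else 0) := by
    intro z
    conv_lhs => rw [pi_eq_sum_univ z]
    rw [map_sum]
    refine Finset.sum_congr rfl fun k _ => ?_
    rw [map_smul]; simp
  refine ⟨fun k => f (fun j' => if k = j' then (1:ℝ) else 0), ?_, ?_⟩
  · intro j
    have := hgen j
    rwa [hrep (a j)] at this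
  · rw [← hrep d]; linarith

lemma lp_duality {ι κ : Type*} [Fintype ι] [DecidableEq ι] [Fintype κ] [DecidableEq κ]
    (A : κ → ι → ℝ) (b : κ → ℝ) (c : ι → ℝ) (v : ℝ)
    (hmax : IsGreatest {s : ℝ | ∃ x : ι → ℝ, (∀ i, 0 ≤ x i) ∧
      (∀ k, ∑ i, A k i * x i = b k) ∧ s = ∑ i, c i * x i} v) :
    IsLeast {s : ℝ | ∃ y : κ → ℝ, (∀ i, c i ≤ ∑ k, A k i * y k) ∧ s = ∑ k, b k * y k} v := by
  classical
  obtain ⟨⟨x₀, hx₀0, hx₀A, hx₀c⟩, hub⟩ := hmax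
  -- weak duality
  have weak : ∀ y : κ → ℝ, (∀ i, c i ≤ ∑ k, A k i * y k) → v ≤ ∑ k, b k * y k := by
    intro y hy
    have : ∑ i, c i * x₀ i ≤ ∑ i, (∑ k, A k i * y k) * x₀ i := by
      refine Finset.sum_le_sum fun i _ => mul_le_mul_of_nonneg_right (hy i) (hx₀0 i)
    calc v = ∑ i, c i * x₀ i := hx₀c
      _ ≤ ∑ i, (∑ k, A k i * y k) * x₀ i := this
      _ = ∑ k, (∑ i, A k i * x₀ i) * y k := by
          simp_rw [Finset.sum_mul]
          rw [Finset.sum_comm]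
          refine Finset.sum_congr rfl fun k _ => Finset.sum_congr rfl fun i _ => by ring
      _ = ∑ k, b k * y k := by
          refine Finset.sum_congr rfl fun k _ => by rw [hx₀A k]
  -- existence of an optimal dual solution via Farkas
  -- variables: y⁺ (κ), y⁻ (κ), slack s (ι), slack t (Unit); constraints: ι ⊕ Unit
  set a : (κ ⊕ κ ⊕ ι ⊕ Unit) → (ι ⊕ Unit → ℝ) :=
    fun j => match j with
      | Sum.inl k => Sum.elim (fun i => A k i) (fun _ => b k)
      | Sum.inr (Sum.inl k) => Sum.elim (fun i => -A k i) (fun _ => -b k)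
      | Sum.inr (Sum.inr (Sum.inl i')) => Sum.elim (fun i => if i = i' then -1 else 0) (fun _ => 0)
      | Sum.inr (Sum.inr (Sum.inr _)) => Sum.elim (fun _ => 0) (fun _ => 1)
    with ha
  set d : ι ⊕ Unit → ℝ := Sum.elim c (fun _ => v) with hd
  have hsolv : ∃ u : κ ⊕ κ ⊕ ι ⊕ Unit → ℝ, (∀ j, 0 ≤ u j) ∧ d = ∑ j, u j • a j := by
    by_contra hcon
    obtain ⟨w, hw1, hw2⟩ := farkas a d hcon
    set x : ι → ℝ := fun i => w (Sum.inl i) with hx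
    set γ : ℝ := w (Sum.inr ()) with hγ
    -- unpack the four families of conditions
    have hsum : ∀ z : ι ⊕ Unit → ℝ, ∑ k, z k * w k = ∑ i, z (Sum.inl i) * x i + z (Sum.inr ()) * γ := by
      intro z
      rw [Fintype.sum_sum_type]
      simp [hx, hγ]
    have hA : ∀ k, ∑ i, A k i * x i + b k * γ = 0 := by
      intro k
      have h1 := hw1 (Sum.inl k)
      have h2 := hw1 (Sum.inr (Sum.inl k))
      rw [hsum] at h1 h2
      simp only [ha, Sum.elim_inl, Sum.elim_inr] at h1 h2
      simp only [neg_mul, Finset.sum_neg_distrib] at h2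
      linarith
    have hxle : ∀ i, x i ≤ 0 := by
      intro i'
      have := hw1 (Sum.inr (Sum.inr (Sum.inl i')))
      rw [hsum] at this
      simp only [ha, Sum.elim_inl, Sum.elim_inr, ite_mul, one_mul, zero_mul,
        Finset.sum_ite_eq'] at this
      simp only [Finset.mem_univ, if_true, neg_mul, zero_mul, add_zero] at this
      -- this : 0 ≤ -x i' (roughly)
      nlinarith [this]
    have hγ0 : 0 ≤ γ := by
      have := hw1 (Sum.inr (Sum.inr (Sum.inr ())))
      rw [hsum] at this
      simp only [ha, Sum.elim_inl, Sum.elim_inr, zero_mul, one_mul, Finset.sum_const_zero,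
        zero_add] at this
      exact this
    have hobj : ∑ i, c i * x i + v * γ < 0 := by
      rw [hsum] at hw2
      simpa [hd] using hw2
    rcases eq_or_lt_of_le hγ0 with hγeq | hγpos
    · -- γ = 0 : improve x₀
      have hAx : ∀ k, ∑ i, A k i * x i = 0 := by
        intro k; have := hA k; rw [← hγeq] at this; linarith
      have hcx : ∑ i, c i * x i < 0 := by
        rw [← hγeq] at hobj; linarith
      have hmem : (∑ i, c i * (x₀ i - x i)) ∈ {s : ℝ | ∃ x : ι → ℝ, (∀ i, 0 ≤ x i) ∧
          (∀ k, ∑ i, A k i * x i = b k) ∧ s = ∑ i, c i * x i} := by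
        refine ⟨fun i => x₀ i - x i, fun i => by
          show 0 ≤ x₀ i - x i
          linarith [hx₀0 i, hxle i], fun k => ?_, rfl⟩
        rw [show (fun i => A k i * (x₀ i - x i)) = fun i => A k i * x₀ i - A k i * x i by
              funext i; ring]
        rw [Finset.sum_sub_distrib, hx₀A k, hAx k, sub_zero]
      have hle := hub hmem
      have : ∑ i, c i * (x₀ i - x i) = ∑ i, c i * x₀ i - ∑ i, c i * x i := by
        rw [← Finset.sum_sub_distrib]
        refine Finset.sum_congr rfl fun i _ => by ring
      rw [this, ← hx₀c] at hle
      linarith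
    · -- γ > 0 : -(1/γ) x is feasible with value > v
      have hmem : (∑ i, c i * (-(1/γ) * x i)) ∈ {s : ℝ | ∃ x : ι → ℝ, (∀ i, 0 ≤ x i) ∧
          (∀ k, ∑ i, A k i * x i = b k) ∧ s = ∑ i, c i * x i} := by
        refine ⟨fun i => -(1/γ) * x i, fun i => ?_, fun k => ?_, rfl⟩
        · show 0 ≤ -(1/γ) * x i
          have := hxle i
          have h1γ : 0 < 1/γ := by positivity
          nlinarith
        · show ∑ i, A k i * (-(1/γ) * x i) = b k
          have h1 := hA k
          have h2 : ∑ i, A k i * x i = -(b k * γ) := by linarith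
          rw [show (fun i => A k i * (-(1/γ) * x i)) = fun i => (-(1/γ)) * (A k i * x i) by
                funext i; ring]
          rw [← Finset.mul_sum, h2]
          field_simp
      have hle := hub hmem
      have heq : ∑ i, c i * (-(1/γ) * x i) = -(1/γ) * ∑ i, c i * x i := by
        rw [Finset.mul_sum]
        refine Finset.sum_congr rfl fun i _ => by ring
      rw [heq] at hle
      have hcx : ∑ i, c i * x i < -(v * γ) := by linarith
      have : -(1/γ) * ∑ i, c i * x i > -(1/γ) * (-(v*γ)) := by
        apply mul_lt_mul_of_neg_left hcx
        have : 0 < 1/γ := by positivity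
        linarith
      have hvv : -(1/γ) * (-(v*γ)) = v := by field_simp
      rw [hvv] at this
      linarith
  -- extract the dual optimal solution
  obtain ⟨u, hu0, hud⟩ := hsolv
  set y : κ → ℝ := fun k => u (Sum.inl k) - u (Sum.inr (Sum.inl k)) with hy
  have heval : ∀ z : ι ⊕ Unit, d z = ∑ j, u j • a j z := by
    intro z; rw [hud]; simp [Finset.sum_apply]
  have hcoord : ∀ z : ι ⊕ Unit, (∑ j : κ ⊕ κ ⊕ ι ⊕ Unit, u j • a j z) =
      ∑ k, u (Sum.inl k) * a (Sum.inl k) z + (∑ k, u (Sum.inr (Sum.inl k)) * a (Sum.inr (Sum.inl k)) z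
        + (∑ i', u (Sum.inr (Sum.inr (Sum.inl i'))) * a (Sum.inr (Sum.inr (Sum.inl i'))) z
          + u (Sum.inr (Sum.inr (Sum.inr ()))) * a (Sum.inr (Sum.inr (Sum.inr ()))) z)) := by
    intro z
    rw [Fintype.sum_sum_type, Fintype.sum_sum_type, Fintype.sum_sum_type]
    simp [smul_eq_mul]
  have negsum : ∀ (f : κ → ℝ), ∑ k, u (Sum.inr (Sum.inl k)) * (-(f k))
      = -∑ k, u (Sum.inr (Sum.inl k)) * f k := by
    intro f
    rw [← Finset.sum_neg_distrib]
    exact Finset.sum_congr rfl fun k _ => by ring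
  have hfeas : ∀ i, c i ≤ ∑ k, A k i * y k := by
    intro i
    have hthis := heval (Sum.inl i)
    rw [hcoord] at hthis
    simp only [ha, hd, Sum.elim_inl] at hthis
    have e1 : ∑ i', u (Sum.inr (Sum.inr (Sum.inl i'))) * (if i = i' then (-1:ℝ) else 0)
        = -u (Sum.inr (Sum.inr (Sum.inl i))) := by
      simp [mul_ite, Finset.sum_ite_eq]
    have e2 := negsum (fun k => A k i)
    rw [e1, e2] at hthis
    have hs := hu0 (Sum.inr (Sum.inr (Sum.inl i)))
    have hexpand : ∑ k, A k i * y k =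
        ∑ k, u (Sum.inl k) * A k i - ∑ k, u (Sum.inr (Sum.inl k)) * A k i := by
      rw [← Finset.sum_sub_distrib]
      refine Finset.sum_congr rfl fun k _ => by simp only [hy]; ring
    rw [hexpand]
    simp only [mul_zero, mul_one, add_zero, mul_neg] at hthis
    linarith [hthis]
  have hval : ∑ k, b k * y k ≤ v := by
    have := heval (Sum.inr ())
    rw [hcoord] at this
    simp only [ha, hd, Sum.elim_inr] at this
    have e2 := negsum b
    simp only [mul_neg] at this e2
    rw [e2] at this
    have ht := hu0 (Sum.inr (Sum.inr (Sum.inr ())))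
    have hexpand : ∑ k, b k * y k =
        ∑ k, u (Sum.inl k) * b k - ∑ k, u (Sum.inr (Sum.inl k)) * b k := by
      rw [← Finset.sum_sub_distrib]
      refine Finset.sum_congr rfl fun k _ => by simp only [hy]; ring
    rw [hexpand]
    simp only [mul_zero, mul_one, Finset.sum_const_zero, zero_add, add_zero] at this
    linarith [this]
  have hvy : ∑ k, b k * y k = v := le_antisymm hval (weak y hfeas)
  exact ⟨⟨y, hfeas, hvy.symm⟩, fun s ⟨y', hy', hs⟩ => hs ▸ weak y' hy'⟩

-- helper sums
lemma sum_fst_ite {n m : ℕ} (i : Fin n) (f : Fin n × Fin m → ℝ) :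
    ∑ p : Fin n × Fin m, (if p.1 = i then f p else 0) = ∑ j, f (i, j) := by
  rw [Fintype.sum_prod_type]
  rw [Finset.sum_eq_single i]
  · simp
  · intro b _ hb
    simp [hb]
  · simp

lemma sum_snd_ite {n m : ℕ} (j : Fin m) (f : Fin n × Fin m → ℝ) :
    ∑ p : Fin n × Fin m, (if p.2 = j then f p else 0) = ∑ i, f (i, j) := by
  rw [Fintype.sum_prod_type_right]
  rw [Finset.sum_eq_single j]
  · simp
  · intro b _ hb
    simp [hb]
  · simp

theorem stmt_19 (NX NY : ℕ) (hNX : 0 < NX) (hNY : 0 < NY)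
    (μ : Fin NX → ℝ) (ν : Fin NY → ℝ)
    (hμ0 : ∀ i, 0 ≤ μ i) (hν0 : ∀ j, 0 ≤ ν j)
    (hμ1 : ∑ i, μ i = 1) (hν1 : ∑ j, ν j = 1)
    (L : Fin NX → Fin NY → ℝ) (α : ℝ) (hα : α ∈ Set.Ioo (0:ℝ) 1) :
    ∃ v : ℝ,
      IsGreatest {s : ℝ | ∃ π Θ : Fin NX → Fin NY → ℝ,
        (∀ i j, 0 ≤ π i j) ∧ (∀ i j, 0 ≤ Θ i j) ∧
        (∀ i, ∑ j, π i j = μ i) ∧ (∀ j, ∑ i, π i j = ν j) ∧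
        (∀ i j, Θ i j ≤ (1 - α)⁻¹ * π i j) ∧
        (∑ i, ∑ j, Θ i j = 1) ∧
        s = ∑ i, ∑ j, L i j * Θ i j} v ∧
      IsLeast {s : ℝ | ∃ (φ : Fin NX → ℝ) (ψ : Fin NY → ℝ)
          (ρ : Fin NX → Fin NY → ℝ) (β : ℝ),
        (∀ i j, ρ i j ≤ (1 - α) * (φ i + ψ j)) ∧
        (∀ i j, L i j ≤ ρ i j + β) ∧
        (∀ i j, 0 ≤ ρ i j) ∧
        s = ∑ i, φ i * μ i + ∑ j, ψ j * ν j + β} v := by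
  classical
  obtain ⟨hα0, hα1⟩ := hα
  have h1α : (0:ℝ) < 1 - α := by linarith
  have hinv0 : (0:ℝ) < (1-α)⁻¹ := inv_pos.mpr h1α
  have hinv1 : (1:ℝ) ≤ (1-α)⁻¹ := by
    have h : (1-α) * (1-α)⁻¹ = 1 := mul_inv_cancel₀ h1α.ne'
    nlinarith
  -- index types
  set P := Fin NX × Fin NY
  -- LP data
  set A : (Fin NX ⊕ Fin NY ⊕ P ⊕ Unit) → (P ⊕ P ⊕ P) → ℝ :=
    fun k => match k with
    | .inl i => Sum.elim (fun p => if p.1 = i then (1:ℝ) else 0) (fun _ => 0)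
    | .inr (.inl j) => Sum.elim (fun p => if p.2 = j then (1:ℝ) else 0) (fun _ => 0)
    | .inr (.inr (.inl q)) => Sum.elim (fun p => if p = q then -(1-α)⁻¹ else 0)
        (Sum.elim (fun p => if p = q then (1:ℝ) else 0) (fun p => if p = q then (1:ℝ) else 0))
    | .inr (.inr (.inr _)) => Sum.elim (fun _ => 0) (Sum.elim (fun _ => (1:ℝ)) (fun _ => 0))
    with hA
  set b : Fin NX ⊕ Fin NY ⊕ P ⊕ Unit → ℝ :=
    Sum.elim μ (Sum.elim ν (Sum.elim (fun _ => 0) (fun _ => 1))) with hb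
  set c : P ⊕ P ⊕ P → ℝ :=
    Sum.elim (fun _ => 0) (Sum.elim (fun q => L q.1 q.2) (fun _ => 0)) with hc
  -- the row sums of A against a vector x
  have rowsum : ∀ (x : P ⊕ P ⊕ P → ℝ) (k : Fin NX ⊕ Fin NY ⊕ P ⊕ Unit),
      ∑ i, A k i * x i =
        match k with
        | .inl i => ∑ j, x (.inl (i, j))
        | .inr (.inl j) => ∑ i, x (.inl (i, j))
        | .inr (.inr (.inl q)) => -(1-α)⁻¹ * x (.inl q) + x (.inr (.inl q)) + x (.inr (.inr q))
        | .inr (.inr (.inr _)) => ∑ q : P, x (.inr (.inl q)) := by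
    intro x k
    rw [Fintype.sum_sum_type, Fintype.sum_sum_type]
    match k with
    | .inl i =>
      simp only [hA, Sum.elim_inl, Sum.elim_inr, ite_mul, one_mul, zero_mul]
      rw [sum_fst_ite i (fun p => x (.inl p))]
      simp
    | .inr (.inl j) =>
      simp only [hA, Sum.elim_inl, Sum.elim_inr, ite_mul, one_mul, zero_mul]
      rw [sum_snd_ite j (fun p => x (.inl p))]
      simp
    | .inr (.inr (.inl q)) =>
      simp only [hA, Sum.elim_inl, Sum.elim_inr, ite_mul, one_mul, zero_mul]
      rw [Finset.sum_ite_eq' Finset.univ q (fun p => -(1-α)⁻¹ * x (.inl p)),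
        Finset.sum_ite_eq' Finset.univ q (fun p => x (.inr (.inl p))),
        Finset.sum_ite_eq' Finset.univ q (fun p => x (.inr (.inr p)))]
      simp [add_assoc]
    | .inr (.inr (.inr u)) =>
      simp only [hA, Sum.elim_inl, Sum.elim_inr, one_mul, zero_mul]
      simp
  -- objective
  have objsum : ∀ (x : P ⊕ P ⊕ P → ℝ),
      ∑ i, c i * x i = ∑ q : P, L q.1 q.2 * x (.inr (.inl q)) := by
    intro x
    rw [Fintype.sum_sum_type, Fintype.sum_sum_type]
    simp [hc]
  -- equality of primal sets
  have hPset : {s : ℝ | ∃ π Θ : Fin NX → Fin NY → ℝ,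
        (∀ i j, 0 ≤ π i j) ∧ (∀ i j, 0 ≤ Θ i j) ∧
        (∀ i, ∑ j, π i j = μ i) ∧ (∀ j, ∑ i, π i j = ν j) ∧
        (∀ i j, Θ i j ≤ (1 - α)⁻¹ * π i j) ∧
        (∑ i, ∑ j, Θ i j = 1) ∧
        s = ∑ i, ∑ j, L i j * Θ i j}
      = {s : ℝ | ∃ x : P ⊕ P ⊕ P → ℝ, (∀ i, 0 ≤ x i) ∧
          (∀ k, ∑ i, A k i * x i = b k) ∧ s = ∑ i, c i * x i} := by
    ext s
    constructor
    · rintro ⟨π, Θ, hπ0, hΘ0, hrow, hcol, hΘπ, hΘ1, rfl⟩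
      refine ⟨Sum.elim (fun p => π p.1 p.2) (Sum.elim (fun p => Θ p.1 p.2)
        (fun p => (1-α)⁻¹ * π p.1 p.2 - Θ p.1 p.2)), ?_, ?_, ?_⟩
      · rintro (p | p | p)
        · exact hπ0 p.1 p.2
        · exact hΘ0 p.1 p.2
        · simp only [Sum.elim_inl, Sum.elim_inr]
          have := hΘπ p.1 p.2
          linarith
      · intro k
        rw [rowsum _ k]
        match k with
        | .inl i => simpa [hb] using hrow i
        | .inr (.inl j) => simpa [hb] using hcol j
        | .inr (.inr (.inl q)) =>
          simp only [hb, Sum.elim_inl, Sum.elim_inr]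
          ring
        | .inr (.inr (.inr u)) =>
          simp only [Sum.elim_inl, Sum.elim_inr, hb]
          rw [Fintype.sum_prod_type]
          exact hΘ1
      · rw [objsum]
        rw [Fintype.sum_prod_type]
        simp
    · rintro ⟨x, hx0, hxA, rfl⟩
      refine ⟨fun i j => x (.inl (i, j)), fun i j => x (.inr (.inl (i, j))),
        fun i j => hx0 _, fun i j => hx0 _, ?_, ?_, ?_, ?_, ?_⟩
      · intro i
        have h := (rowsum x (.inl i)).symm.trans (hxA (.inl i))
        simpa [hb] using h
      · intro j
        have h := (rowsum x (.inr (.inl j))).symm.trans (hxA (.inr (.inl j)))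
        simpa [hb] using h
      · intro i j
        have h := (rowsum x (.inr (.inr (.inl (i, j))))).symm.trans
          (hxA (.inr (.inr (.inl (i, j)))))
        simp only [hb, Sum.elim_inl, Sum.elim_inr] at h
        have hs := hx0 (.inr (.inr (i, j)))
        linarith
      · have h := (rowsum x (.inr (.inr (.inr ())))).symm.trans (hxA (.inr (.inr (.inr ()))))
        simp only [hb, Sum.elim_inl, Sum.elim_inr] at h
        rw [← h, Fintype.sum_prod_type]
      · rw [objsum, Fintype.sum_prod_type]
  -- equality of dual sets
  have hDset : {s : ℝ | ∃ (φ : Fin NX → ℝ) (ψ : Fin NY → ℝ)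
          (ρ : Fin NX → Fin NY → ℝ) (β : ℝ),
        (∀ i j, ρ i j ≤ (1 - α) * (φ i + ψ j)) ∧
        (∀ i j, L i j ≤ ρ i j + β) ∧
        (∀ i j, 0 ≤ ρ i j) ∧
        s = ∑ i, φ i * μ i + ∑ j, ψ j * ν j + β}
      = {s : ℝ | ∃ y : Fin NX ⊕ Fin NY ⊕ P ⊕ Unit → ℝ,
          (∀ i, c i ≤ ∑ k, A k i * y k) ∧ s = ∑ k, b k * y k} := by
    -- dual column sums
    have colsum : ∀ (y : Fin NX ⊕ Fin NY ⊕ P ⊕ Unit → ℝ) (i : P ⊕ P ⊕ P),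
        ∑ k, A k i * y k =
          match i with
          | .inl q => y (.inl q.1) + y (.inr (.inl q.2)) - (1-α)⁻¹ * y (.inr (.inr (.inl q)))
          | .inr (.inl q) => y (.inr (.inr (.inl q))) + y (.inr (.inr (.inr ())))
          | .inr (.inr q) => y (.inr (.inr (.inl q))) := by
      intro y i
      rw [Fintype.sum_sum_type, Fintype.sum_sum_type, Fintype.sum_sum_type]
      match i with
      | .inl q =>
        simp only [hA, Sum.elim_inl, Sum.elim_inr, ite_mul, one_mul, zero_mul, neg_mul]
        rw [Finset.sum_ite_eq Finset.univ q.1 (fun i' => y (.inl i')),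
          Finset.sum_ite_eq Finset.univ q.2 (fun j' => y (.inr (.inl j'))),
          Finset.sum_ite_eq Finset.univ q (fun q' => -((1-α)⁻¹ * y (.inr (.inr (.inl q')))))]
        simp
        ring
      | .inr (.inl q) =>
        simp only [hA, Sum.elim_inl, Sum.elim_inr, ite_mul, one_mul, zero_mul]
        rw [Finset.sum_ite_eq Finset.univ q (fun q' => y (.inr (.inr (.inl q'))))]
        simp
      | .inr (.inr q) =>
        simp only [hA, Sum.elim_inl, Sum.elim_inr, ite_mul, one_mul, zero_mul]
        rw [Finset.sum_ite_eq Finset.univ q (fun q' => y (.inr (.inr (.inl q'))))]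
        simp
    have bsum : ∀ (y : Fin NX ⊕ Fin NY ⊕ P ⊕ Unit → ℝ),
        ∑ k, b k * y k = ∑ i, μ i * y (.inl i) + ∑ j, ν j * y (.inr (.inl j))
          + y (.inr (.inr (.inr ()))) := by
      intro y
      rw [Fintype.sum_sum_type, Fintype.sum_sum_type, Fintype.sum_sum_type]
      simp [hb, add_assoc]
    ext s
    constructor
    · rintro ⟨φ, ψ, ρ, β, hρub, hLρ, hρ0, rfl⟩
      refine ⟨Sum.elim φ (Sum.elim ψ (Sum.elim (fun q => ρ q.1 q.2) (fun _ => β))), ?_, ?_⟩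
      · intro i
        rw [colsum _ i]
        match i with
        | .inl q =>
          simp only [hc, Sum.elim_inl, Sum.elim_inr]
          have h := hρub q.1 q.2
          have h2 : (1-α)⁻¹ * ρ q.1 q.2 ≤ (1-α)⁻¹ * ((1-α) * (φ q.1 + ψ q.2)) :=
            mul_le_mul_of_nonneg_left h hinv0.le
          rw [← mul_assoc, inv_mul_cancel₀ h1α.ne', one_mul] at h2
          linarith
        | .inr (.inl q) =>
          simp only [hc, Sum.elim_inl, Sum.elim_inr]
          exact hLρ q.1 q.2
        | .inr (.inr q) =>
          simp only [hc, Sum.elim_inl, Sum.elim_inr]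
          exact hρ0 q.1 q.2
      · rw [bsum]
        simp only [Sum.elim_inl, Sum.elim_inr]
        congr 1
        congr 1
        · exact Finset.sum_congr rfl fun i _ => mul_comm _ _
        · exact Finset.sum_congr rfl fun j _ => mul_comm _ _
    · rintro ⟨y, hy, rfl⟩
      refine ⟨fun i => y (.inl i), fun j => y (.inr (.inl j)),
        fun i j => y (.inr (.inr (.inl (i, j)))), y (.inr (.inr (.inr ()))), ?_, ?_, ?_, ?_⟩
      · intro i j
        have := (colsum y (.inl (i, j))) ▸ (hy (.inl (i, j)))
        simp only [hc, Sum.elim_inl] at this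
        have h2 : (1-α) * ((1-α)⁻¹ * y (.inr (.inr (.inl (i,j)))))
            ≤ (1-α) * (y (.inl i) + y (.inr (.inl j))) := by
          apply mul_le_mul_of_nonneg_left _ h1α.le
          linarith
        rw [← mul_assoc, mul_inv_cancel₀ h1α.ne', one_mul] at h2
        exact h2
      · intro i j
        have := (colsum y (.inr (.inl (i, j)))) ▸ (hy (.inr (.inl (i, j))))
        simpa [hc] using this
      · intro i j
        have := (colsum y (.inr (.inr (i, j)))) ▸ (hy (.inr (.inr (i, j))))
        simpa [hc] using this
      · rw [bsum]
        congr 1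
        congr 1
        · exact Finset.sum_congr rfl fun i _ => mul_comm _ _
        · exact Finset.sum_congr rfl fun j _ => mul_comm _ _
  -- attainment of the primal maximum by compactness
  set T := (Fin NX → Fin NY → ℝ) × (Fin NX → Fin NY → ℝ)
  set C : Set T :=
    {p | (∀ i j, 0 ≤ p.1 i j) ∧ (∀ i j, 0 ≤ p.2 i j) ∧
      (∀ i, ∑ j, p.1 i j = μ i) ∧ (∀ j, ∑ i, p.1 i j = ν j) ∧
      (∀ i j, p.2 i j ≤ (1 - α)⁻¹ * p.1 i j) ∧
      (∑ i, ∑ j, p.2 i j = 1)} with hCdef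
  have hμle1 : ∀ i, μ i ≤ 1 := by
    intro i
    rw [← hμ1]
    exact Finset.single_le_sum (fun i _ => hμ0 i) (Finset.mem_univ i)
  have cont1 : ∀ (i : Fin NX) (j : Fin NY), Continuous fun p : T => p.1 i j :=
    fun i j => (continuous_apply j).comp ((continuous_apply i).comp continuous_fst)
  have cont2 : ∀ (i : Fin NX) (j : Fin NY), Continuous fun p : T => p.2 i j :=
    fun i j => (continuous_apply j).comp ((continuous_apply i).comp continuous_snd)
  have hCsub : C ⊆ (Set.pi Set.univ fun _ => Set.pi Set.univ fun _ => Icc (0:ℝ) ((1-α)⁻¹)) ×ˢ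
      (Set.pi Set.univ fun _ => Set.pi Set.univ fun _ => Icc (0:ℝ) ((1-α)⁻¹)) := by
    rintro ⟨π, Θ⟩ ⟨h1, h2, h3, h4, h5, h6⟩
    have hπle : ∀ i j, π i j ≤ 1 := by
      intro i j
      calc π i j ≤ ∑ j', π i j' :=
            Finset.single_le_sum (fun j' _ => h1 i j') (Finset.mem_univ j)
        _ = μ i := h3 i
        _ ≤ 1 := hμle1 i
    constructor
    · intro i _ j _
      exact ⟨h1 i j, le_trans (hπle i j) hinv1⟩
    · intro i _ j _
      refine ⟨h2 i j, ?_⟩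
      calc Θ i j ≤ (1-α)⁻¹ * π i j := h5 i j
        _ ≤ (1-α)⁻¹ * 1 := mul_le_mul_of_nonneg_left (hπle i j) hinv0.le
        _ = (1-α)⁻¹ := mul_one _
  have hKcomp : IsCompact ((Set.pi Set.univ fun _ : Fin NX => Set.pi Set.univ
        fun _ : Fin NY => Icc (0:ℝ) ((1-α)⁻¹)) ×ˢ
      (Set.pi Set.univ fun _ : Fin NX => Set.pi Set.univ
        fun _ : Fin NY => Icc (0:ℝ) ((1-α)⁻¹))) :=
    (isCompact_univ_pi fun _ => isCompact_univ_pi fun _ => isCompact_Icc).prod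
      (isCompact_univ_pi fun _ => isCompact_univ_pi fun _ => isCompact_Icc)
  have hCclosed : IsClosed C := by
    have e : C = (⋂ i, ⋂ j, {p : T | 0 ≤ p.1 i j}) ∩
        ((⋂ i, ⋂ j, {p : T | 0 ≤ p.2 i j}) ∩
        ((⋂ i, {p : T | ∑ j, p.1 i j = μ i}) ∩
        ((⋂ j, {p : T | ∑ i, p.1 i j = ν j}) ∩
        ((⋂ i, ⋂ j, {p : T | p.2 i j ≤ (1-α)⁻¹ * p.1 i j}) ∩
        {p : T | ∑ i, ∑ j, p.2 i j = 1})))) := by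
      ext p
      simp only [hCdef, Set.mem_setOf_eq, Set.mem_inter_iff, Set.mem_iInter]
    rw [e]
    refine IsClosed.inter ?_ (IsClosed.inter ?_ (IsClosed.inter ?_
      (IsClosed.inter ?_ (IsClosed.inter ?_ ?_))))
    · exact isClosed_iInter fun i => isClosed_iInter fun j =>
        isClosed_le continuous_const (cont1 i j)
    · exact isClosed_iInter fun i => isClosed_iInter fun j =>
        isClosed_le continuous_const (cont2 i j)
    · exact isClosed_iInter fun i => isClosed_eq
        (continuous_finset_sum _ fun j _ => cont1 i j) continuous_const
    · exact isClosed_iInter fun j => isClosed_eq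
        (continuous_finset_sum _ fun i _ => cont1 i j) continuous_const
    · exact isClosed_iInter fun i => isClosed_iInter fun j =>
        isClosed_le (cont2 i j) (continuous_const.mul (cont1 i j))
    · exact isClosed_eq (continuous_finset_sum _ fun i _ =>
        continuous_finset_sum _ fun j _ => cont2 i j) continuous_const
  have hCcomp : IsCompact C := hKcomp.of_isClosed_subset hCclosed hCsub
  have hp₀ : ((fun i j => μ i * ν j, fun i j => μ i * ν j) : T) ∈ C := by
    refine ⟨fun i j => mul_nonneg (hμ0 i) (hν0 j), fun i j => mul_nonneg (hμ0 i) (hν0 j),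
      ?_, ?_, ?_, ?_⟩
    · intro i
      rw [← Finset.mul_sum, hν1, mul_one]
    · intro j
      rw [← Finset.sum_mul, hμ1, one_mul]
    · intro i j
      exact le_mul_of_one_le_left (mul_nonneg (hμ0 i) (hν0 j)) hinv1
    · simp only []
      calc ∑ i, ∑ j, μ i * ν j = ∑ i, μ i * ∑ j, ν j := by
            refine Finset.sum_congr rfl fun i _ => (Finset.mul_sum _ _ _).symm
        _ = 1 := by rw [hν1]; simpa using hμ1
  have hg : Continuous (fun p : T => ∑ i, ∑ j, L i j * p.2 i j) :=
    continuous_finset_sum _ fun i _ => continuous_finset_sum _ fun j _ =>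
      continuous_const.mul (cont2 i j)
  obtain ⟨v, hvmem, hvub⟩ := (hCcomp.image hg).exists_isGreatest
    ⟨_, Set.mem_image_of_mem _ hp₀⟩
  have himgeq : (fun p : T => ∑ i, ∑ j, L i j * p.2 i j) '' C
      = {s : ℝ | ∃ π Θ : Fin NX → Fin NY → ℝ,
        (∀ i j, 0 ≤ π i j) ∧ (∀ i j, 0 ≤ Θ i j) ∧
        (∀ i, ∑ j, π i j = μ i) ∧ (∀ j, ∑ i, π i j = ν j) ∧
        (∀ i j, Θ i j ≤ (1 - α)⁻¹ * π i j) ∧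
        (∑ i, ∑ j, Θ i j = 1) ∧
        s = ∑ i, ∑ j, L i j * Θ i j} := by
    ext s
    constructor
    · rintro ⟨⟨π, Θ⟩, ⟨h1, h2, h3, h4, h5, h6⟩, rfl⟩
      exact ⟨π, Θ, h1, h2, h3, h4, h5, h6, rfl⟩
    · rintro ⟨π, Θ, h1, h2, h3, h4, h5, h6, rfl⟩
      exact ⟨(π, Θ), ⟨h1, h2, h3, h4, h5, h6⟩, rfl⟩
  rw [himgeq] at hvmem hvub
  have hvmax : IsGreatest {s : ℝ | ∃ π Θ : Fin NX → Fin NY → ℝ,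
        (∀ i j, 0 ≤ π i j) ∧ (∀ i j, 0 ≤ Θ i j) ∧
        (∀ i, ∑ j, π i j = μ i) ∧ (∀ j, ∑ i, π i j = ν j) ∧
        (∀ i j, Θ i j ≤ (1 - α)⁻¹ * π i j) ∧
        (∑ i, ∑ j, Θ i j = 1) ∧
        s = ∑ i, ∑ j, L i j * Θ i j} v := ⟨hvmem, hvub⟩
  refine ⟨v, hvmax, ?_⟩
  rw [hDset]
  have hvmax' := hvmax
  rw [hPset] at hvmax'
  exact lp_duality A b c v hvmax'
end
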